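/- Let g be a finite-dimensional real Lie algebra, h and l finite-dimensional real vector spaces, α̃ : h → g and β̃ : l → h linear maps, ▷ : g × h → h and ▷ : g × l → l bilinear Lie algebra actions, {,} : h × h → l a g-equivariant bilinear map (X ▷ {Y₁,Y₂} = {X ▷ Y₁, Y₂} + {Y₁, X ▷ Y₂}), with α̃(X ▷ Y) = [X, α̃(Y)] and β̃(X ▷ Z) = X ▷ β̃(Z). On an open set U ⊆ ℝ^d, let A be a smooth g-valued 1-form, B a smooth h-valued 2-form and C a smooth l-valued 3-form, and set Ω₁ := dA + ½ A ∧^{[,]} A, Ω₂ := dB + A ∧^▷ B, Ω₃ := dC + A ∧^▷ C + B ∧^{{,}} B. If the 3-connection (A, B, C) is fake-flat, i.e. Ω₁ = α̃ ∘ B and Ω₂ = β̃ ∘ C, then: (i) dΩ₁ + A ∧^{[,]} Ω₁ = 0; (ii) dΩ₂ + A ∧^▷ Ω₂ = Ω₁ ∧^▷ B; (iii) dΩ₃ + A ∧^▷ Ω₃ = Ω₁ ∧^▷ C + Ω₂ ∧^{{,}} B + B ∧^{{,}} Ω₂. -/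

import Mathlib

/-! Wedge product of vector-valued alternating forms along a bilinear map,
given by the shuffle-sum formula
`(ω ∧_μ η)(v₁,…,v_{k₁+k₂}) = Σ_σ sgn(σ) μ(ω(v_{σ(1)},…,v_{σ(k₁)}), η(v_{σ(k₁+1)},…,v_{σ(k₁+k₂)}))`,
the sum ranging over (k₁,k₂)-shuffles σ. -/

/-- The finset of (k₁,k₂)-shuffles: permutations of `Fin (k₁+k₂)` that are strictly
increasing on the first `k₁` indices and on the last `k₂` indices. -/
def shuffleSet (k₁ k₂ : ℕ) : Finset (Equiv.Perm (Fin (k₁ + k₂))) :=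
  Finset.univ.filter fun σ =>
    (∀ i j : Fin k₁, i < j → σ (Fin.castAdd k₂ i) < σ (Fin.castAdd k₂ j)) ∧
    (∀ i j : Fin k₂, i < j → σ (Fin.natAdd k₁ i) < σ (Fin.natAdd k₁ j))

/-- The wedge product along a bilinear map `μ : E →ₗ F →ₗ W`, defined on the underlying
functions of vector-valued forms by the shuffle-sum formula. -/
def wedgeRaw {V E F W : Type*} [AddCommGroup E] [Module ℝ E] [AddCommGroup F] [Module ℝ F]
    [AddCommGroup W] [Module ℝ W] {k₁ k₂ : ℕ}
    (μ : E →ₗ[ℝ] F →ₗ[ℝ] W)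
    (ω : (Fin k₁ → V) → E) (η : (Fin k₂ → V) → F) :
    (Fin (k₁ + k₂) → V) → W :=
  fun v => ∑ σ ∈ shuffleSet k₁ k₂,
    (Equiv.Perm.sign σ : ℤ) •
      μ (ω fun i => v (σ (Fin.castAdd k₂ i))) (η fun i => v (σ (Fin.natAdd k₁ i)))

/-- Reinterpret a `k`-form as a `k'`-form along an equality of degrees `k = k'`. -/
def castRaw {V W : Type*} {k k' : ℕ} (h : k = k') (ω : (Fin k → V) → W) :
    (Fin k' → V) → W :=
  fun v => ω fun i => v (Fin.cast h i)

/-! The exterior derivative of a smooth vector-valued differential form, given pointwise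
by `(dω)_x(v₀,…,v_k) = Σ_{i=0}^{k} (−1)^i (Dω(x)·v_i)(v₀,…,v̂ᵢ,…,v_k)`, where `D` is the
Fréchet derivative and `v̂ᵢ` denotes omission of the `i`-th vector. A smooth `W`-valued
differential `k`-form on an open set `U ⊆ ℝ^d` is a map `ω` from `ℝ^d` to the space of
`W`-valued alternating `k`-forms on `ℝ^d` which is smooth on `U`, smoothness being
expressed by requiring every evaluation `x ↦ ω x v` to be `C^∞` on `U`. -/

/-- The exterior derivative, defined on the underlying functions of vector-valued
differential forms via the Fréchet derivative. -/
noncomputable def extDerivRaw {X W : Type*} [NormedAddCommGroup X] [NormedSpace ℝ X]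
    [NormedAddCommGroup W] [NormedSpace ℝ W] {k : ℕ}
    (ω : X → (Fin k → X) → W) (x : X) : (Fin (k + 1) → X) → W :=
  fun v => ∑ i : Fin (k + 1),
    (-1 : ℤ) ^ (i : ℕ) • fderiv ℝ (fun y => ω y (v ∘ i.succAbove)) x (v i)

/-- A form-valued map is smooth on `U` iff all its evaluations are. -/
def SmoothFormOn {X E : Type*} [NormedAddCommGroup X] [NormedSpace ℝ X]
    [NormedAddCommGroup E] [NormedSpace ℝ E] {k : ℕ}
    (ω : X → AlternatingMap ℝ X E (Fin k)) (U : Set X) : Prop :=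
  ∀ v : Fin k → X, ContDiffOn ℝ (⊤ : ℕ∞) (fun x => ω x v) U

lemma W11 {V E F W : Type*} [AddCommGroup E] [Module ℝ E] [AddCommGroup F] [Module ℝ F]
    [AddCommGroup W] [Module ℝ W] (μ : E →ₗ[ℝ] F →ₗ[ℝ] W)
    (ω : (Fin 1 → V) → E) (η : (Fin 1 → V) → F) (v : Fin 2 → V) :
    wedgeRaw μ ω η v = μ (ω ![v 0]) (η ![v 1]) - μ (ω ![v 1]) (η ![v 0]) := by
  have hs : shuffleSet 1 1 = ([(⟨![0,1], ![0,1], by decide, by decide⟩ : Equiv.Perm (Fin 2)), (⟨![1,0], ![1,0], by decide, by decide⟩ : Equiv.Perm (Fin 2))] : List (Equiv.Perm (Fin 2))).toFinset := by decide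
  simp only [wedgeRaw]
  rw [hs, List.sum_toFinset _ (by decide)]
  simp only [List.map_cons, List.map_nil, List.sum_cons, List.sum_nil, add_zero]
  rw [show (fun i : Fin 1 => v ((⟨![0,1], ![0,1], by decide, by decide⟩ : Equiv.Perm (Fin 2)) (Fin.castAdd 1 i))) = ![v 0] from by funext i; fin_cases i <;> exact congrArg v (by decide)]
  rw [show (fun i : Fin 1 => v ((⟨![0,1], ![0,1], by decide, by decide⟩ : Equiv.Perm (Fin 2)) (Fin.natAdd 1 i))) = ![v 1] from by funext i; fin_cases i <;> exact congrArg v (by decide)]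
  rw [show ((Equiv.Perm.sign (⟨![0,1], ![0,1], by decide, by decide⟩ : Equiv.Perm (Fin 2)) : ℤˣ) : ℤ) = 1 from by decide]
  rw [show (fun i : Fin 1 => v ((⟨![1,0], ![1,0], by decide, by decide⟩ : Equiv.Perm (Fin 2)) (Fin.castAdd 1 i))) = ![v 1] from by funext i; fin_cases i <;> exact congrArg v (by decide)]
  rw [show (fun i : Fin 1 => v ((⟨![1,0], ![1,0], by decide, by decide⟩ : Equiv.Perm (Fin 2)) (Fin.natAdd 1 i))) = ![v 0] from by funext i; fin_cases i <;> exact congrArg v (by decide)]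
  rw [show ((Equiv.Perm.sign (⟨![1,0], ![1,0], by decide, by decide⟩ : Equiv.Perm (Fin 2)) : ℤˣ) : ℤ) = -1 from by decide]
  simp only [one_smul, neg_smul, one_zsmul]
  abel

lemma W12 {V E F W : Type*} [AddCommGroup E] [Module ℝ E] [AddCommGroup F] [Module ℝ F]
    [AddCommGroup W] [Module ℝ W] (μ : E →ₗ[ℝ] F →ₗ[ℝ] W)
    (ω : (Fin 1 → V) → E) (η : (Fin 2 → V) → F) (v : Fin 3 → V) :
    wedgeRaw μ ω η v = μ (ω ![v 0]) (η ![v 1, v 2]) - μ (ω ![v 1]) (η ![v 0, v 2]) + μ (ω ![v 2]) (η ![v 0, v 1]) := by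
  have hs : shuffleSet 1 2 = ([(⟨![0,1,2], ![0,1,2], by decide, by decide⟩ : Equiv.Perm (Fin 3)), (⟨![1,0,2], ![1,0,2], by decide, by decide⟩ : Equiv.Perm (Fin 3)), (⟨![2,0,1], ![1,2,0], by decide, by decide⟩ : Equiv.Perm (Fin 3))] : List (Equiv.Perm (Fin 3))).toFinset := by decide
  simp only [wedgeRaw]
  rw [hs, List.sum_toFinset _ (by decide)]
  simp only [List.map_cons, List.map_nil, List.sum_cons, List.sum_nil, add_zero]
  rw [show (fun i : Fin 1 => v ((⟨![0,1,2], ![0,1,2], by decide, by decide⟩ : Equiv.Perm (Fin 3)) (Fin.castAdd 2 i))) = ![v 0] from by funext i; fin_cases i <;> exact congrArg v (by decide)]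
  rw [show (fun i : Fin 2 => v ((⟨![0,1,2], ![0,1,2], by decide, by decide⟩ : Equiv.Perm (Fin 3)) (Fin.natAdd 1 i))) = ![v 1, v 2] from by funext i; fin_cases i <;> exact congrArg v (by decide)]
  rw [show ((Equiv.Perm.sign (⟨![0,1,2], ![0,1,2], by decide, by decide⟩ : Equiv.Perm (Fin 3)) : ℤˣ) : ℤ) = 1 from by decide]
  rw [show (fun i : Fin 1 => v ((⟨![1,0,2], ![1,0,2], by decide, by decide⟩ : Equiv.Perm (Fin 3)) (Fin.castAdd 2 i))) = ![v 1] from by funext i; fin_cases i <;> exact congrArg v (by decide)]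
  rw [show (fun i : Fin 2 => v ((⟨![1,0,2], ![1,0,2], by decide, by decide⟩ : Equiv.Perm (Fin 3)) (Fin.natAdd 1 i))) = ![v 0, v 2] from by funext i; fin_cases i <;> exact congrArg v (by decide)]
  rw [show ((Equiv.Perm.sign (⟨![1,0,2], ![1,0,2], by decide, by decide⟩ : Equiv.Perm (Fin 3)) : ℤˣ) : ℤ) = -1 from by decide]
  rw [show (fun i : Fin 1 => v ((⟨![2,0,1], ![1,2,0], by decide, by decide⟩ : Equiv.Perm (Fin 3)) (Fin.castAdd 2 i))) = ![v 2] from by funext i; fin_cases i <;> exact congrArg v (by decide)]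
  rw [show (fun i : Fin 2 => v ((⟨![2,0,1], ![1,2,0], by decide, by decide⟩ : Equiv.Perm (Fin 3)) (Fin.natAdd 1 i))) = ![v 0, v 1] from by funext i; fin_cases i <;> exact congrArg v (by decide)]
  rw [show ((Equiv.Perm.sign (⟨![2,0,1], ![1,2,0], by decide, by decide⟩ : Equiv.Perm (Fin 3)) : ℤˣ) : ℤ) = 1 from by decide]
  simp only [one_smul, neg_smul, one_zsmul]
  abel

lemma W21 {V E F W : Type*} [AddCommGroup E] [Module ℝ E] [AddCommGroup F] [Module ℝ F]
    [AddCommGroup W] [Module ℝ W] (μ : E →ₗ[ℝ] F →ₗ[ℝ] W)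
    (ω : (Fin 2 → V) → E) (η : (Fin 1 → V) → F) (v : Fin 3 → V) :
    wedgeRaw μ ω η v = μ (ω ![v 0, v 1]) (η ![v 2]) - μ (ω ![v 0, v 2]) (η ![v 1]) + μ (ω ![v 1, v 2]) (η ![v 0]) := by
  have hs : shuffleSet 2 1 = ([(⟨![0,1,2], ![0,1,2], by decide, by decide⟩ : Equiv.Perm (Fin 3)), (⟨![0,2,1], ![0,2,1], by decide, by decide⟩ : Equiv.Perm (Fin 3)), (⟨![1,2,0], ![2,0,1], by decide, by decide⟩ : Equiv.Perm (Fin 3))] : List (Equiv.Perm (Fin 3))).toFinset := by decide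
  simp only [wedgeRaw]
  rw [hs, List.sum_toFinset _ (by decide)]
  simp only [List.map_cons, List.map_nil, List.sum_cons, List.sum_nil, add_zero]
  rw [show (fun i : Fin 2 => v ((⟨![0,1,2], ![0,1,2], by decide, by decide⟩ : Equiv.Perm (Fin 3)) (Fin.castAdd 1 i))) = ![v 0, v 1] from by funext i; fin_cases i <;> exact congrArg v (by decide)]
  rw [show (fun i : Fin 1 => v ((⟨![0,1,2], ![0,1,2], by decide, by decide⟩ : Equiv.Perm (Fin 3)) (Fin.natAdd 2 i))) = ![v 2] from by funext i; fin_cases i <;> exact congrArg v (by decide)]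
  rw [show ((Equiv.Perm.sign (⟨![0,1,2], ![0,1,2], by decide, by decide⟩ : Equiv.Perm (Fin 3)) : ℤˣ) : ℤ) = 1 from by decide]
  rw [show (fun i : Fin 2 => v ((⟨![0,2,1], ![0,2,1], by decide, by decide⟩ : Equiv.Perm (Fin 3)) (Fin.castAdd 1 i))) = ![v 0, v 2] from by funext i; fin_cases i <;> exact congrArg v (by decide)]
  rw [show (fun i : Fin 1 => v ((⟨![0,2,1], ![0,2,1], by decide, by decide⟩ : Equiv.Perm (Fin 3)) (Fin.natAdd 2 i))) = ![v 1] from by funext i; fin_cases i <;> exact congrArg v (by decide)]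
  rw [show ((Equiv.Perm.sign (⟨![0,2,1], ![0,2,1], by decide, by decide⟩ : Equiv.Perm (Fin 3)) : ℤˣ) : ℤ) = -1 from by decide]
  rw [show (fun i : Fin 2 => v ((⟨![1,2,0], ![2,0,1], by decide, by decide⟩ : Equiv.Perm (Fin 3)) (Fin.castAdd 1 i))) = ![v 1, v 2] from by funext i; fin_cases i <;> exact congrArg v (by decide)]
  rw [show (fun i : Fin 1 => v ((⟨![1,2,0], ![2,0,1], by decide, by decide⟩ : Equiv.Perm (Fin 3)) (Fin.natAdd 2 i))) = ![v 0] from by funext i; fin_cases i <;> exact congrArg v (by decide)]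
  rw [show ((Equiv.Perm.sign (⟨![1,2,0], ![2,0,1], by decide, by decide⟩ : Equiv.Perm (Fin 3)) : ℤˣ) : ℤ) = 1 from by decide]
  simp only [one_smul, neg_smul, one_zsmul]
  abel

lemma W13 {V E F W : Type*} [AddCommGroup E] [Module ℝ E] [AddCommGroup F] [Module ℝ F]
    [AddCommGroup W] [Module ℝ W] (μ : E →ₗ[ℝ] F →ₗ[ℝ] W)
    (ω : (Fin 1 → V) → E) (η : (Fin 3 → V) → F) (v : Fin 4 → V) :
    wedgeRaw μ ω η v = μ (ω ![v 0]) (η ![v 1, v 2, v 3]) - μ (ω ![v 1]) (η ![v 0, v 2, v 3]) + μ (ω ![v 2]) (η ![v 0, v 1, v 3]) - μ (ω ![v 3]) (η ![v 0, v 1, v 2]) := by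
  have hs : shuffleSet 1 3 = ([(⟨![0,1,2,3], ![0,1,2,3], by decide, by decide⟩ : Equiv.Perm (Fin 4)), (⟨![1,0,2,3], ![1,0,2,3], by decide, by decide⟩ : Equiv.Perm (Fin 4)), (⟨![2,0,1,3], ![1,2,0,3], by decide, by decide⟩ : Equiv.Perm (Fin 4)), (⟨![3,0,1,2], ![1,2,3,0], by decide, by decide⟩ : Equiv.Perm (Fin 4))] : List (Equiv.Perm (Fin 4))).toFinset := by decide
  simp only [wedgeRaw]
  rw [hs, List.sum_toFinset _ (by decide)]
  simp only [List.map_cons, List.map_nil, List.sum_cons, List.sum_nil, add_zero]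
  rw [show (fun i : Fin 1 => v ((⟨![0,1,2,3], ![0,1,2,3], by decide, by decide⟩ : Equiv.Perm (Fin 4)) (Fin.castAdd 3 i))) = ![v 0] from by funext i; fin_cases i <;> exact congrArg v (by decide)]
  rw [show (fun i : Fin 3 => v ((⟨![0,1,2,3], ![0,1,2,3], by decide, by decide⟩ : Equiv.Perm (Fin 4)) (Fin.natAdd 1 i))) = ![v 1, v 2, v 3] from by funext i; fin_cases i <;> exact congrArg v (by decide)]
  rw [show ((Equiv.Perm.sign (⟨![0,1,2,3], ![0,1,2,3], by decide, by decide⟩ : Equiv.Perm (Fin 4)) : ℤˣ) : ℤ) = 1 from by decide]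
  rw [show (fun i : Fin 1 => v ((⟨![1,0,2,3], ![1,0,2,3], by decide, by decide⟩ : Equiv.Perm (Fin 4)) (Fin.castAdd 3 i))) = ![v 1] from by funext i; fin_cases i <;> exact congrArg v (by decide)]
  rw [show (fun i : Fin 3 => v ((⟨![1,0,2,3], ![1,0,2,3], by decide, by decide⟩ : Equiv.Perm (Fin 4)) (Fin.natAdd 1 i))) = ![v 0, v 2, v 3] from by funext i; fin_cases i <;> exact congrArg v (by decide)]
  rw [show ((Equiv.Perm.sign (⟨![1,0,2,3], ![1,0,2,3], by decide, by decide⟩ : Equiv.Perm (Fin 4)) : ℤˣ) : ℤ) = -1 from by decide]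
  rw [show (fun i : Fin 1 => v ((⟨![2,0,1,3], ![1,2,0,3], by decide, by decide⟩ : Equiv.Perm (Fin 4)) (Fin.castAdd 3 i))) = ![v 2] from by funext i; fin_cases i <;> exact congrArg v (by decide)]
  rw [show (fun i : Fin 3 => v ((⟨![2,0,1,3], ![1,2,0,3], by decide, by decide⟩ : Equiv.Perm (Fin 4)) (Fin.natAdd 1 i))) = ![v 0, v 1, v 3] from by funext i; fin_cases i <;> exact congrArg v (by decide)]
  rw [show ((Equiv.Perm.sign (⟨![2,0,1,3], ![1,2,0,3], by decide, by decide⟩ : Equiv.Perm (Fin 4)) : ℤˣ) : ℤ) = 1 from by decide]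
  rw [show (fun i : Fin 1 => v ((⟨![3,0,1,2], ![1,2,3,0], by decide, by decide⟩ : Equiv.Perm (Fin 4)) (Fin.castAdd 3 i))) = ![v 3] from by funext i; fin_cases i <;> exact congrArg v (by decide)]
  rw [show (fun i : Fin 3 => v ((⟨![3,0,1,2], ![1,2,3,0], by decide, by decide⟩ : Equiv.Perm (Fin 4)) (Fin.natAdd 1 i))) = ![v 0, v 1, v 2] from by funext i; fin_cases i <;> exact congrArg v (by decide)]
  rw [show ((Equiv.Perm.sign (⟨![3,0,1,2], ![1,2,3,0], by decide, by decide⟩ : Equiv.Perm (Fin 4)) : ℤˣ) : ℤ) = -1 from by decide]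
  simp only [one_smul, neg_smul, one_zsmul]
  abel

lemma W22 {V E F W : Type*} [AddCommGroup E] [Module ℝ E] [AddCommGroup F] [Module ℝ F]
    [AddCommGroup W] [Module ℝ W] (μ : E →ₗ[ℝ] F →ₗ[ℝ] W)
    (ω : (Fin 2 → V) → E) (η : (Fin 2 → V) → F) (v : Fin 4 → V) :
    wedgeRaw μ ω η v = μ (ω ![v 0, v 1]) (η ![v 2, v 3]) - μ (ω ![v 0, v 2]) (η ![v 1, v 3]) + μ (ω ![v 0, v 3]) (η ![v 1, v 2]) + μ (ω ![v 1, v 2]) (η ![v 0, v 3]) - μ (ω ![v 1, v 3]) (η ![v 0, v 2]) + μ (ω ![v 2, v 3]) (η ![v 0, v 1]) := by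
  have hs : shuffleSet 2 2 = ([(⟨![0,1,2,3], ![0,1,2,3], by decide, by decide⟩ : Equiv.Perm (Fin 4)), (⟨![0,2,1,3], ![0,2,1,3], by decide, by decide⟩ : Equiv.Perm (Fin 4)), (⟨![0,3,1,2], ![0,2,3,1], by decide, by decide⟩ : Equiv.Perm (Fin 4)), (⟨![1,2,0,3], ![2,0,1,3], by decide, by decide⟩ : Equiv.Perm (Fin 4)), (⟨![1,3,0,2], ![2,0,3,1], by decide, by decide⟩ : Equiv.Perm (Fin 4)), (⟨![2,3,0,1], ![2,3,0,1], by decide, by decide⟩ : Equiv.Perm (Fin 4))] : List (Equiv.Perm (Fin 4))).toFinset := by decide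
  simp only [wedgeRaw]
  rw [hs, List.sum_toFinset _ (by decide)]
  simp only [List.map_cons, List.map_nil, List.sum_cons, List.sum_nil, add_zero]
  rw [show (fun i : Fin 2 => v ((⟨![0,1,2,3], ![0,1,2,3], by decide, by decide⟩ : Equiv.Perm (Fin 4)) (Fin.castAdd 2 i))) = ![v 0, v 1] from by funext i; fin_cases i <;> exact congrArg v (by decide)]
  rw [show (fun i : Fin 2 => v ((⟨![0,1,2,3], ![0,1,2,3], by decide, by decide⟩ : Equiv.Perm (Fin 4)) (Fin.natAdd 2 i))) = ![v 2, v 3] from by funext i; fin_cases i <;> exact congrArg v (by decide)]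
  rw [show ((Equiv.Perm.sign (⟨![0,1,2,3], ![0,1,2,3], by decide, by decide⟩ : Equiv.Perm (Fin 4)) : ℤˣ) : ℤ) = 1 from by decide]
  rw [show (fun i : Fin 2 => v ((⟨![0,2,1,3], ![0,2,1,3], by decide, by decide⟩ : Equiv.Perm (Fin 4)) (Fin.castAdd 2 i))) = ![v 0, v 2] from by funext i; fin_cases i <;> exact congrArg v (by decide)]
  rw [show (fun i : Fin 2 => v ((⟨![0,2,1,3], ![0,2,1,3], by decide, by decide⟩ : Equiv.Perm (Fin 4)) (Fin.natAdd 2 i))) = ![v 1, v 3] from by funext i; fin_cases i <;> exact congrArg v (by decide)]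
  rw [show ((Equiv.Perm.sign (⟨![0,2,1,3], ![0,2,1,3], by decide, by decide⟩ : Equiv.Perm (Fin 4)) : ℤˣ) : ℤ) = -1 from by decide]
  rw [show (fun i : Fin 2 => v ((⟨![0,3,1,2], ![0,2,3,1], by decide, by decide⟩ : Equiv.Perm (Fin 4)) (Fin.castAdd 2 i))) = ![v 0, v 3] from by funext i; fin_cases i <;> exact congrArg v (by decide)]
  rw [show (fun i : Fin 2 => v ((⟨![0,3,1,2], ![0,2,3,1], by decide, by decide⟩ : Equiv.Perm (Fin 4)) (Fin.natAdd 2 i))) = ![v 1, v 2] from by funext i; fin_cases i <;> exact congrArg v (by decide)]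
  rw [show ((Equiv.Perm.sign (⟨![0,3,1,2], ![0,2,3,1], by decide, by decide⟩ : Equiv.Perm (Fin 4)) : ℤˣ) : ℤ) = 1 from by decide]
  rw [show (fun i : Fin 2 => v ((⟨![1,2,0,3], ![2,0,1,3], by decide, by decide⟩ : Equiv.Perm (Fin 4)) (Fin.castAdd 2 i))) = ![v 1, v 2] from by funext i; fin_cases i <;> exact congrArg v (by decide)]
  rw [show (fun i : Fin 2 => v ((⟨![1,2,0,3], ![2,0,1,3], by decide, by decide⟩ : Equiv.Perm (Fin 4)) (Fin.natAdd 2 i))) = ![v 0, v 3] from by funext i; fin_cases i <;> exact congrArg v (by decide)]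
  rw [show ((Equiv.Perm.sign (⟨![1,2,0,3], ![2,0,1,3], by decide, by decide⟩ : Equiv.Perm (Fin 4)) : ℤˣ) : ℤ) = 1 from by decide]
  rw [show (fun i : Fin 2 => v ((⟨![1,3,0,2], ![2,0,3,1], by decide, by decide⟩ : Equiv.Perm (Fin 4)) (Fin.castAdd 2 i))) = ![v 1, v 3] from by funext i; fin_cases i <;> exact congrArg v (by decide)]
  rw [show (fun i : Fin 2 => v ((⟨![1,3,0,2], ![2,0,3,1], by decide, by decide⟩ : Equiv.Perm (Fin 4)) (Fin.natAdd 2 i))) = ![v 0, v 2] from by funext i; fin_cases i <;> exact congrArg v (by decide)]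
  rw [show ((Equiv.Perm.sign (⟨![1,3,0,2], ![2,0,3,1], by decide, by decide⟩ : Equiv.Perm (Fin 4)) : ℤˣ) : ℤ) = -1 from by decide]
  rw [show (fun i : Fin 2 => v ((⟨![2,3,0,1], ![2,3,0,1], by decide, by decide⟩ : Equiv.Perm (Fin 4)) (Fin.castAdd 2 i))) = ![v 2, v 3] from by funext i; fin_cases i <;> exact congrArg v (by decide)]
  rw [show (fun i : Fin 2 => v ((⟨![2,3,0,1], ![2,3,0,1], by decide, by decide⟩ : Equiv.Perm (Fin 4)) (Fin.natAdd 2 i))) = ![v 0, v 1] from by funext i; fin_cases i <;> exact congrArg v (by decide)]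
  rw [show ((Equiv.Perm.sign (⟨![2,3,0,1], ![2,3,0,1], by decide, by decide⟩ : Equiv.Perm (Fin 4)) : ℤˣ) : ℤ) = 1 from by decide]
  simp only [one_smul, neg_smul, one_zsmul]
  abel

lemma W32 {V E F W : Type*} [AddCommGroup E] [Module ℝ E] [AddCommGroup F] [Module ℝ F]
    [AddCommGroup W] [Module ℝ W] (μ : E →ₗ[ℝ] F →ₗ[ℝ] W)
    (ω : (Fin 3 → V) → E) (η : (Fin 2 → V) → F) (v : Fin 5 → V) :
    wedgeRaw μ ω η v = μ (ω ![v 0, v 1, v 2]) (η ![v 3, v 4]) - μ (ω ![v 0, v 1, v 3]) (η ![v 2, v 4]) + μ (ω ![v 0, v 1, v 4]) (η ![v 2, v 3]) + μ (ω ![v 0, v 2, v 3]) (η ![v 1, v 4]) - μ (ω ![v 0, v 2, v 4]) (η ![v 1, v 3]) + μ (ω ![v 0, v 3, v 4]) (η ![v 1, v 2]) - μ (ω ![v 1, v 2, v 3]) (η ![v 0, v 4]) + μ (ω ![v 1, v 2, v 4]) (η ![v 0, v 3]) - μ (ω ![v 1, v 3, v 4]) (η ![v 0, v 2]) + μ (ω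 ![v 2, v 3, v 4]) (η ![v 0, v 1]) := by
  have hs : shuffleSet 3 2 = ([(⟨![0,1,2,3,4], ![0,1,2,3,4], by decide, by decide⟩ : Equiv.Perm (Fin 5)), (⟨![0,1,3,2,4], ![0,1,3,2,4], by decide, by decide⟩ : Equiv.Perm (Fin 5)), (⟨![0,1,4,2,3], ![0,1,3,4,2], by decide, by decide⟩ : Equiv.Perm (Fin 5)), (⟨![0,2,3,1,4], ![0,3,1,2,4], by decide, by decide⟩ : Equiv.Perm (Fin 5)), (⟨![0,2,4,1,3], ![0,3,1,4,2], by decide, by decide⟩ : Equiv.Perm (Fin 5)), (⟨![0,3,4,1,2], ![0,3,4,1,2], by decide, by decide⟩ : Equiv.Perm (Fin 5)), (⟨![1,2,3,0,4], ![3,0,1,2,4], by decide, by decide⟩ : Equiv.Perm (Fin 5)), (⟨![1,2,4,0,3], ![3,0,1,4,2], by decide, by decide⟩ : Equiv.Perm (Fin 5)), (⟨![1,3,4,0,2], ![3,0,4,1,2], by decide, by decide⟩ : Equiv.Perm (Fin 5)), (⟨![2,3,4,0,1], ![3,4,0,1,2], by decide, by decide⟩ : Equiv.Perm (Fin 5))]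 : List (Equiv.Perm (Fin 5))).toFinset := by decide
  simp only [wedgeRaw]
  rw [hs, List.sum_toFinset _ (by decide)]
  simp only [List.map_cons, List.map_nil, List.sum_cons, List.sum_nil, add_zero]
  rw [show (fun i : Fin 3 => v ((⟨![0,1,2,3,4], ![0,1,2,3,4], by decide, by decide⟩ : Equiv.Perm (Fin 5)) (Fin.castAdd 2 i))) = ![v 0, v 1, v 2] from by funext i; fin_cases i <;> exact congrArg v (by decide)]
  rw [show (fun i : Fin 2 => v ((⟨![0,1,2,3,4], ![0,1,2,3,4], by decide, by decide⟩ : Equiv.Perm (Fin 5)) (Fin.natAdd 3 i))) = ![v 3, v 4] from by funext i; fin_cases i <;> exact congrArg v (by decide)]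
  rw [show ((Equiv.Perm.sign (⟨![0,1,2,3,4], ![0,1,2,3,4], by decide, by decide⟩ : Equiv.Perm (Fin 5)) : ℤˣ) : ℤ) = 1 from by decide]
  rw [show (fun i : Fin 3 => v ((⟨![0,1,3,2,4], ![0,1,3,2,4], by decide, by decide⟩ : Equiv.Perm (Fin 5)) (Fin.castAdd 2 i))) = ![v 0, v 1, v 3] from by funext i; fin_cases i <;> exact congrArg v (by decide)]
  rw [show (fun i : Fin 2 => v ((⟨![0,1,3,2,4], ![0,1,3,2,4], by decide, by decide⟩ : Equiv.Perm (Fin 5)) (Fin.natAdd 3 i))) = ![v 2, v 4] from by funext i; fin_cases i <;> exact congrArg v (by decide)]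
  rw [show ((Equiv.Perm.sign (⟨![0,1,3,2,4], ![0,1,3,2,4], by decide, by decide⟩ : Equiv.Perm (Fin 5)) : ℤˣ) : ℤ) = -1 from by decide]
  rw [show (fun i : Fin 3 => v ((⟨![0,1,4,2,3], ![0,1,3,4,2], by decide, by decide⟩ : Equiv.Perm (Fin 5)) (Fin.castAdd 2 i))) = ![v 0, v 1, v 4] from by funext i; fin_cases i <;> exact congrArg v (by decide)]
  rw [show (fun i : Fin 2 => v ((⟨![0,1,4,2,3], ![0,1,3,4,2], by decide, by decide⟩ : Equiv.Perm (Fin 5)) (Fin.natAdd 3 i))) = ![v 2, v 3] from by funext i; fin_cases i <;> exact congrArg v (by decide)]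
  rw [show ((Equiv.Perm.sign (⟨![0,1,4,2,3], ![0,1,3,4,2], by decide, by decide⟩ : Equiv.Perm (Fin 5)) : ℤˣ) : ℤ) = 1 from by decide]
  rw [show (fun i : Fin 3 => v ((⟨![0,2,3,1,4], ![0,3,1,2,4], by decide, by decide⟩ : Equiv.Perm (Fin 5)) (Fin.castAdd 2 i))) = ![v 0, v 2, v 3] from by funext i; fin_cases i <;> exact congrArg v (by decide)]
  rw [show (fun i : Fin 2 => v ((⟨![0,2,3,1,4], ![0,3,1,2,4], by decide, by decide⟩ : Equiv.Perm (Fin 5)) (Fin.natAdd 3 i))) = ![v 1, v 4] from by funext i; fin_cases i <;> exact congrArg v (by decide)]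
  rw [show ((Equiv.Perm.sign (⟨![0,2,3,1,4], ![0,3,1,2,4], by decide, by decide⟩ : Equiv.Perm (Fin 5)) : ℤˣ) : ℤ) = 1 from by decide]
  rw [show (fun i : Fin 3 => v ((⟨![0,2,4,1,3], ![0,3,1,4,2], by decide, by decide⟩ : Equiv.Perm (Fin 5)) (Fin.castAdd 2 i))) = ![v 0, v 2, v 4] from by funext i; fin_cases i <;> exact congrArg v (by decide)]
  rw [show (fun i : Fin 2 => v ((⟨![0,2,4,1,3], ![0,3,1,4,2], by decide, by decide⟩ : Equiv.Perm (Fin 5)) (Fin.natAdd 3 i))) = ![v 1, v 3] from by funext i; fin_cases i <;> exact congrArg v (by decide)]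
  rw [show ((Equiv.Perm.sign (⟨![0,2,4,1,3], ![0,3,1,4,2], by decide, by decide⟩ : Equiv.Perm (Fin 5)) : ℤˣ) : ℤ) = -1 from by decide]
  rw [show (fun i : Fin 3 => v ((⟨![0,3,4,1,2], ![0,3,4,1,2], by decide, by decide⟩ : Equiv.Perm (Fin 5)) (Fin.castAdd 2 i))) = ![v 0, v 3, v 4] from by funext i; fin_cases i <;> exact congrArg v (by decide)]
  rw [show (fun i : Fin 2 => v ((⟨![0,3,4,1,2], ![0,3,4,1,2], by decide, by decide⟩ : Equiv.Perm (Fin 5)) (Fin.natAdd 3 i))) = ![v 1, v 2] from by funext i; fin_cases i <;> exact congrArg v (by decide)]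
  rw [show ((Equiv.Perm.sign (⟨![0,3,4,1,2], ![0,3,4,1,2], by decide, by decide⟩ : Equiv.Perm (Fin 5)) : ℤˣ) : ℤ) = 1 from by decide]
  rw [show (fun i : Fin 3 => v ((⟨![1,2,3,0,4], ![3,0,1,2,4], by decide, by decide⟩ : Equiv.Perm (Fin 5)) (Fin.castAdd 2 i))) = ![v 1, v 2, v 3] from by funext i; fin_cases i <;> exact congrArg v (by decide)]
  rw [show (fun i : Fin 2 => v ((⟨![1,2,3,0,4], ![3,0,1,2,4], by decide, by decide⟩ : Equiv.Perm (Fin 5)) (Fin.natAdd 3 i))) = ![v 0, v 4] from by funext i; fin_cases i <;> exact congrArg v (by decide)]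
  rw [show ((Equiv.Perm.sign (⟨![1,2,3,0,4], ![3,0,1,2,4], by decide, by decide⟩ : Equiv.Perm (Fin 5)) : ℤˣ) : ℤ) = -1 from by decide]
  rw [show (fun i : Fin 3 => v ((⟨![1,2,4,0,3], ![3,0,1,4,2], by decide, by decide⟩ : Equiv.Perm (Fin 5)) (Fin.castAdd 2 i))) = ![v 1, v 2, v 4] from by funext i; fin_cases i <;> exact congrArg v (by decide)]
  rw [show (fun i : Fin 2 => v ((⟨![1,2,4,0,3], ![3,0,1,4,2], by decide, by decide⟩ : Equiv.Perm (Fin 5)) (Fin.natAdd 3 i))) = ![v 0, v 3] from by funext i; fin_cases i <;> exact congrArg v (by decide)]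
  rw [show ((Equiv.Perm.sign (⟨![1,2,4,0,3], ![3,0,1,4,2], by decide, by decide⟩ : Equiv.Perm (Fin 5)) : ℤˣ) : ℤ) = 1 from by decide]
  rw [show (fun i : Fin 3 => v ((⟨![1,3,4,0,2], ![3,0,4,1,2], by decide, by decide⟩ : Equiv.Perm (Fin 5)) (Fin.castAdd 2 i))) = ![v 1, v 3, v 4] from by funext i; fin_cases i <;> exact congrArg v (by decide)]
  rw [show (fun i : Fin 2 => v ((⟨![1,3,4,0,2], ![3,0,4,1,2], by decide, by decide⟩ : Equiv.Perm (Fin 5)) (Fin.natAdd 3 i))) = ![v 0, v 2] from by funext i; fin_cases i <;> exact congrArg v (by decide)]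
  rw [show ((Equiv.Perm.sign (⟨![1,3,4,0,2], ![3,0,4,1,2], by decide, by decide⟩ : Equiv.Perm (Fin 5)) : ℤˣ) : ℤ) = -1 from by decide]
  rw [show (fun i : Fin 3 => v ((⟨![2,3,4,0,1], ![3,4,0,1,2], by decide, by decide⟩ : Equiv.Perm (Fin 5)) (Fin.castAdd 2 i))) = ![v 2, v 3, v 4] from by funext i; fin_cases i <;> exact congrArg v (by decide)]
  rw [show (fun i : Fin 2 => v ((⟨![2,3,4,0,1], ![3,4,0,1,2], by decide, by decide⟩ : Equiv.Perm (Fin 5)) (Fin.natAdd 3 i))) = ![v 0, v 1] from by funext i; fin_cases i <;> exact congrArg v (by decide)]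
  rw [show ((Equiv.Perm.sign (⟨![2,3,4,0,1], ![3,4,0,1,2], by decide, by decide⟩ : Equiv.Perm (Fin 5)) : ℤˣ) : ℤ) = 1 from by decide]
  simp only [one_smul, neg_smul, one_zsmul]
  abel

lemma W14 {V E F W : Type*} [AddCommGroup E] [Module ℝ E] [AddCommGroup F] [Module ℝ F]
    [AddCommGroup W] [Module ℝ W] (μ : E →ₗ[ℝ] F →ₗ[ℝ] W)
    (ω : (Fin 1 → V) → E) (η : (Fin 4 → V) → F) (v : Fin 5 → V) :
    wedgeRaw μ ω η v = μ (ω ![v 0]) (η ![v 1, v 2, v 3, v 4]) - μ (ω ![v 1]) (η ![v 0, v 2, v 3, v 4]) + μ (ω ![v 2]) (η ![v 0, v 1, v 3, v 4]) - μ (ω ![v 3]) (η ![v 0, v 1, v 2, v 4]) + μ (ω ![v 4]) (η ![v 0, v 1, v 2, v 3]) := by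
  have hs : shuffleSet 1 4 = ([(⟨![0,1,2,3,4], ![0,1,2,3,4], by decide, by decide⟩ : Equiv.Perm (Fin 5)), (⟨![1,0,2,3,4], ![1,0,2,3,4], by decide, by decide⟩ : Equiv.Perm (Fin 5)), (⟨![2,0,1,3,4], ![1,2,0,3,4], by decide, by decide⟩ : Equiv.Perm (Fin 5)), (⟨![3,0,1,2,4], ![1,2,3,0,4], by decide, by decide⟩ : Equiv.Perm (Fin 5)), (⟨![4,0,1,2,3], ![1,2,3,4,0], by decide, by decide⟩ : Equiv.Perm (Fin 5))] : List (Equiv.Perm (Fin 5))).toFinset := by decide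
  simp only [wedgeRaw]
  rw [hs, List.sum_toFinset _ (by decide)]
  simp only [List.map_cons, List.map_nil, List.sum_cons, List.sum_nil, add_zero]
  rw [show (fun i : Fin 1 => v ((⟨![0,1,2,3,4], ![0,1,2,3,4], by decide, by decide⟩ : Equiv.Perm (Fin 5)) (Fin.castAdd 4 i))) = ![v 0] from by funext i; fin_cases i <;> exact congrArg v (by decide)]
  rw [show (fun i : Fin 4 => v ((⟨![0,1,2,3,4], ![0,1,2,3,4], by decide, by decide⟩ : Equiv.Perm (Fin 5)) (Fin.natAdd 1 i))) = ![v 1, v 2, v 3, v 4] from by funext i; fin_cases i <;> exact congrArg v (by decide)]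
  rw [show ((Equiv.Perm.sign (⟨![0,1,2,3,4], ![0,1,2,3,4], by decide, by decide⟩ : Equiv.Perm (Fin 5)) : ℤˣ) : ℤ) = 1 from by decide]
  rw [show (fun i : Fin 1 => v ((⟨![1,0,2,3,4], ![1,0,2,3,4], by decide, by decide⟩ : Equiv.Perm (Fin 5)) (Fin.castAdd 4 i))) = ![v 1] from by funext i; fin_cases i <;> exact congrArg v (by decide)]
  rw [show (fun i : Fin 4 => v ((⟨![1,0,2,3,4], ![1,0,2,3,4], by decide, by decide⟩ : Equiv.Perm (Fin 5)) (Fin.natAdd 1 i))) = ![v 0, v 2, v 3, v 4] from by funext i; fin_cases i <;> exact congrArg v (by decide)]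
  rw [show ((Equiv.Perm.sign (⟨![1,0,2,3,4], ![1,0,2,3,4], by decide, by decide⟩ : Equiv.Perm (Fin 5)) : ℤˣ) : ℤ) = -1 from by decide]
  rw [show (fun i : Fin 1 => v ((⟨![2,0,1,3,4], ![1,2,0,3,4], by decide, by decide⟩ : Equiv.Perm (Fin 5)) (Fin.castAdd 4 i))) = ![v 2] from by funext i; fin_cases i <;> exact congrArg v (by decide)]
  rw [show (fun i : Fin 4 => v ((⟨![2,0,1,3,4], ![1,2,0,3,4], by decide, by decide⟩ : Equiv.Perm (Fin 5)) (Fin.natAdd 1 i))) = ![v 0, v 1, v 3, v 4] from by funext i; fin_cases i <;> exact congrArg v (by decide)]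
  rw [show ((Equiv.Perm.sign (⟨![2,0,1,3,4], ![1,2,0,3,4], by decide, by decide⟩ : Equiv.Perm (Fin 5)) : ℤˣ) : ℤ) = 1 from by decide]
  rw [show (fun i : Fin 1 => v ((⟨![3,0,1,2,4], ![1,2,3,0,4], by decide, by decide⟩ : Equiv.Perm (Fin 5)) (Fin.castAdd 4 i))) = ![v 3] from by funext i; fin_cases i <;> exact congrArg v (by decide)]
  rw [show (fun i : Fin 4 => v ((⟨![3,0,1,2,4], ![1,2,3,0,4], by decide, by decide⟩ : Equiv.Perm (Fin 5)) (Fin.natAdd 1 i))) = ![v 0, v 1, v 2, v 4] from by funext i; fin_cases i <;> exact congrArg v (by decide)]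
  rw [show ((Equiv.Perm.sign (⟨![3,0,1,2,4], ![1,2,3,0,4], by decide, by decide⟩ : Equiv.Perm (Fin 5)) : ℤˣ) : ℤ) = -1 from by decide]
  rw [show (fun i : Fin 1 => v ((⟨![4,0,1,2,3], ![1,2,3,4,0], by decide, by decide⟩ : Equiv.Perm (Fin 5)) (Fin.castAdd 4 i))) = ![v 4] from by funext i; fin_cases i <;> exact congrArg v (by decide)]
  rw [show (fun i : Fin 4 => v ((⟨![4,0,1,2,3], ![1,2,3,4,0], by decide, by decide⟩ : Equiv.Perm (Fin 5)) (Fin.natAdd 1 i))) = ![v 0, v 1, v 2, v 3] from by funext i; fin_cases i <;> exact congrArg v (by decide)]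
  rw [show ((Equiv.Perm.sign (⟨![4,0,1,2,3], ![1,2,3,4,0], by decide, by decide⟩ : Equiv.Perm (Fin 5)) : ℤˣ) : ℤ) = 1 from by decide]
  simp only [one_smul, neg_smul, one_zsmul]
  abel

lemma W23 {V E F W : Type*} [AddCommGroup E] [Module ℝ E] [AddCommGroup F] [Module ℝ F]
    [AddCommGroup W] [Module ℝ W] (μ : E →ₗ[ℝ] F →ₗ[ℝ] W)
    (ω : (Fin 2 → V) → E) (η : (Fin 3 → V) → F) (v : Fin 5 → V) :
    wedgeRaw μ ω η v = μ (ω ![v 0, v 1]) (η ![v 2, v 3, v 4]) - μ (ω ![v 0, v 2]) (η ![v 1, v 3, v 4]) + μ (ω ![v 0, v 3]) (η ![v 1, v 2, v 4]) - μ (ω ![v 0, v 4]) (η ![v 1, v 2, v 3]) + μ (ω ![v 1, v 2]) (η ![v 0, v 3, v 4]) - μ (ω ![v 1, v 3]) (η ![v 0, v 2, v 4]) + μ (ω ![v 1, v 4]) (η ![v 0, v 2, v 3]) + μ (ω ![v 2, v 3]) (η ![v 0, v 1, v 4]) - μ (ω ![v 2, v 4]) (η ![v 0, v 1, v 3]) +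 μ (ω ![v 3, v 4]) (η ![v 0, v 1, v 2]) := by
  have hs : shuffleSet 2 3 = ([(⟨![0,1,2,3,4], ![0,1,2,3,4], by decide, by decide⟩ : Equiv.Perm (Fin 5)), (⟨![0,2,1,3,4], ![0,2,1,3,4], by decide, by decide⟩ : Equiv.Perm (Fin 5)), (⟨![0,3,1,2,4], ![0,2,3,1,4], by decide, by decide⟩ : Equiv.Perm (Fin 5)), (⟨![0,4,1,2,3], ![0,2,3,4,1], by decide, by decide⟩ : Equiv.Perm (Fin 5)), (⟨![1,2,0,3,4], ![2,0,1,3,4], by decide, by decide⟩ : Equiv.Perm (Fin 5)), (⟨![1,3,0,2,4], ![2,0,3,1,4], by decide, by decide⟩ : Equiv.Perm (Fin 5)), (⟨![1,4,0,2,3], ![2,0,3,4,1], by decide, by decide⟩ : Equiv.Perm (Fin 5)), (⟨![2,3,0,1,4], ![2,3,0,1,4], by decide, by decide⟩ : Equiv.Perm (Fin 5)), (⟨![2,4,0,1,3], ![2,3,0,4,1], by decide, by decide⟩ : Equiv.Perm (Fin 5)), (⟨![3,4,0,1,2], ![2,3,4,0,1], by decide, by decide⟩ : Equiv.Perm (Fin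 5))] : List (Equiv.Perm (Fin 5))).toFinset := by decide
  simp only [wedgeRaw]
  rw [hs, List.sum_toFinset _ (by decide)]
  simp only [List.map_cons, List.map_nil, List.sum_cons, List.sum_nil, add_zero]
  rw [show (fun i : Fin 2 => v ((⟨![0,1,2,3,4], ![0,1,2,3,4], by decide, by decide⟩ : Equiv.Perm (Fin 5)) (Fin.castAdd 3 i))) = ![v 0, v 1] from by funext i; fin_cases i <;> exact congrArg v (by decide)]
  rw [show (fun i : Fin 3 => v ((⟨![0,1,2,3,4], ![0,1,2,3,4], by decide, by decide⟩ : Equiv.Perm (Fin 5)) (Fin.natAdd 2 i))) = ![v 2, v 3, v 4] from by funext i; fin_cases i <;> exact congrArg v (by decide)]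
  rw [show ((Equiv.Perm.sign (⟨![0,1,2,3,4], ![0,1,2,3,4], by decide, by decide⟩ : Equiv.Perm (Fin 5)) : ℤˣ) : ℤ) = 1 from by decide]
  rw [show (fun i : Fin 2 => v ((⟨![0,2,1,3,4], ![0,2,1,3,4], by decide, by decide⟩ : Equiv.Perm (Fin 5)) (Fin.castAdd 3 i))) = ![v 0, v 2] from by funext i; fin_cases i <;> exact congrArg v (by decide)]
  rw [show (fun i : Fin 3 => v ((⟨![0,2,1,3,4], ![0,2,1,3,4], by decide, by decide⟩ : Equiv.Perm (Fin 5)) (Fin.natAdd 2 i))) = ![v 1, v 3, v 4] from by funext i; fin_cases i <;> exact congrArg v (by decide)]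
  rw [show ((Equiv.Perm.sign (⟨![0,2,1,3,4], ![0,2,1,3,4], by decide, by decide⟩ : Equiv.Perm (Fin 5)) : ℤˣ) : ℤ) = -1 from by decide]
  rw [show (fun i : Fin 2 => v ((⟨![0,3,1,2,4], ![0,2,3,1,4], by decide, by decide⟩ : Equiv.Perm (Fin 5)) (Fin.castAdd 3 i))) = ![v 0, v 3] from by funext i; fin_cases i <;> exact congrArg v (by decide)]
  rw [show (fun i : Fin 3 => v ((⟨![0,3,1,2,4], ![0,2,3,1,4], by decide, by decide⟩ : Equiv.Perm (Fin 5)) (Fin.natAdd 2 i))) = ![v 1, v 2, v 4] from by funext i; fin_cases i <;> exact congrArg v (by decide)]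
  rw [show ((Equiv.Perm.sign (⟨![0,3,1,2,4], ![0,2,3,1,4], by decide, by decide⟩ : Equiv.Perm (Fin 5)) : ℤˣ) : ℤ) = 1 from by decide]
  rw [show (fun i : Fin 2 => v ((⟨![0,4,1,2,3], ![0,2,3,4,1], by decide, by decide⟩ : Equiv.Perm (Fin 5)) (Fin.castAdd 3 i))) = ![v 0, v 4] from by funext i; fin_cases i <;> exact congrArg v (by decide)]
  rw [show (fun i : Fin 3 => v ((⟨![0,4,1,2,3], ![0,2,3,4,1], by decide, by decide⟩ : Equiv.Perm (Fin 5)) (Fin.natAdd 2 i))) = ![v 1, v 2, v 3] from by funext i; fin_cases i <;> exact congrArg v (by decide)]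
  rw [show ((Equiv.Perm.sign (⟨![0,4,1,2,3], ![0,2,3,4,1], by decide, by decide⟩ : Equiv.Perm (Fin 5)) : ℤˣ) : ℤ) = -1 from by decide]
  rw [show (fun i : Fin 2 => v ((⟨![1,2,0,3,4], ![2,0,1,3,4], by decide, by decide⟩ : Equiv.Perm (Fin 5)) (Fin.castAdd 3 i))) = ![v 1, v 2] from by funext i; fin_cases i <;> exact congrArg v (by decide)]
  rw [show (fun i : Fin 3 => v ((⟨![1,2,0,3,4], ![2,0,1,3,4], by decide, by decide⟩ : Equiv.Perm (Fin 5)) (Fin.natAdd 2 i))) = ![v 0, v 3, v 4] from by funext i; fin_cases i <;> exact congrArg v (by decide)]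
  rw [show ((Equiv.Perm.sign (⟨![1,2,0,3,4], ![2,0,1,3,4], by decide, by decide⟩ : Equiv.Perm (Fin 5)) : ℤˣ) : ℤ) = 1 from by decide]
  rw [show (fun i : Fin 2 => v ((⟨![1,3,0,2,4], ![2,0,3,1,4], by decide, by decide⟩ : Equiv.Perm (Fin 5)) (Fin.castAdd 3 i))) = ![v 1, v 3] from by funext i; fin_cases i <;> exact congrArg v (by decide)]
  rw [show (fun i : Fin 3 => v ((⟨![1,3,0,2,4], ![2,0,3,1,4], by decide, by decide⟩ : Equiv.Perm (Fin 5)) (Fin.natAdd 2 i))) = ![v 0, v 2, v 4] from by funext i; fin_cases i <;> exact congrArg v (by decide)]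
  rw [show ((Equiv.Perm.sign (⟨![1,3,0,2,4], ![2,0,3,1,4], by decide, by decide⟩ : Equiv.Perm (Fin 5)) : ℤˣ) : ℤ) = -1 from by decide]
  rw [show (fun i : Fin 2 => v ((⟨![1,4,0,2,3], ![2,0,3,4,1], by decide, by decide⟩ : Equiv.Perm (Fin 5)) (Fin.castAdd 3 i))) = ![v 1, v 4] from by funext i; fin_cases i <;> exact congrArg v (by decide)]
  rw [show (fun i : Fin 3 => v ((⟨![1,4,0,2,3], ![2,0,3,4,1], by decide, by decide⟩ : Equiv.Perm (Fin 5)) (Fin.natAdd 2 i))) = ![v 0, v 2, v 3] from by funext i; fin_cases i <;> exact congrArg v (by decide)]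
  rw [show ((Equiv.Perm.sign (⟨![1,4,0,2,3], ![2,0,3,4,1], by decide, by decide⟩ : Equiv.Perm (Fin 5)) : ℤˣ) : ℤ) = 1 from by decide]
  rw [show (fun i : Fin 2 => v ((⟨![2,3,0,1,4], ![2,3,0,1,4], by decide, by decide⟩ : Equiv.Perm (Fin 5)) (Fin.castAdd 3 i))) = ![v 2, v 3] from by funext i; fin_cases i <;> exact congrArg v (by decide)]
  rw [show (fun i : Fin 3 => v ((⟨![2,3,0,1,4], ![2,3,0,1,4], by decide, by decide⟩ : Equiv.Perm (Fin 5)) (Fin.natAdd 2 i))) = ![v 0, v 1, v 4] from by funext i; fin_cases i <;> exact congrArg v (by decide)]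
  rw [show ((Equiv.Perm.sign (⟨![2,3,0,1,4], ![2,3,0,1,4], by decide, by decide⟩ : Equiv.Perm (Fin 5)) : ℤˣ) : ℤ) = 1 from by decide]
  rw [show (fun i : Fin 2 => v ((⟨![2,4,0,1,3], ![2,3,0,4,1], by decide, by decide⟩ : Equiv.Perm (Fin 5)) (Fin.castAdd 3 i))) = ![v 2, v 4] from by funext i; fin_cases i <;> exact congrArg v (by decide)]
  rw [show (fun i : Fin 3 => v ((⟨![2,4,0,1,3], ![2,3,0,4,1], by decide, by decide⟩ : Equiv.Perm (Fin 5)) (Fin.natAdd 2 i))) = ![v 0, v 1, v 3] from by funext i; fin_cases i <;> exact congrArg v (by decide)]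
  rw [show ((Equiv.Perm.sign (⟨![2,4,0,1,3], ![2,3,0,4,1], by decide, by decide⟩ : Equiv.Perm (Fin 5)) : ℤˣ) : ℤ) = -1 from by decide]
  rw [show (fun i : Fin 2 => v ((⟨![3,4,0,1,2], ![2,3,4,0,1], by decide, by decide⟩ : Equiv.Perm (Fin 5)) (Fin.castAdd 3 i))) = ![v 3, v 4] from by funext i; fin_cases i <;> exact congrArg v (by decide)]
  rw [show (fun i : Fin 3 => v ((⟨![3,4,0,1,2], ![2,3,4,0,1], by decide, by decide⟩ : Equiv.Perm (Fin 5)) (Fin.natAdd 2 i))) = ![v 0, v 1, v 2] from by funext i; fin_cases i <;> exact congrArg v (by decide)]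
  rw [show ((Equiv.Perm.sign (⟨![3,4,0,1,2], ![2,3,4,0,1], by decide, by decide⟩ : Equiv.Perm (Fin 5)) : ℤˣ) : ℤ) = 1 from by decide]
  simp only [one_smul, neg_smul, one_zsmul]
  abel

lemma E2 {X W : Type*} [NormedAddCommGroup X] [NormedSpace ℝ X]
    [NormedAddCommGroup W] [NormedSpace ℝ W]
    (ω : X → (Fin 1 → X) → W) (x : X) (v : Fin 2 → X) :
    extDerivRaw ω x v = fderiv ℝ (fun y => ω y ![v 1]) x (v 0) - fderiv ℝ (fun y => ω y ![v 0]) x (v 1) := by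
  simp only [extDerivRaw]
  rw [Fin.sum_univ_two]
  rw [show (v ∘ Fin.succAbove (0 : Fin 2)) = ![v 1] from by funext i; fin_cases i <;> exact congrArg v (by decide)]
  rw [show ((-1 : ℤ) ^ (((0 : Fin 2)) : ℕ)) = 1 from by decide]
  rw [show (v ∘ Fin.succAbove (1 : Fin 2)) = ![v 0] from by funext i; fin_cases i <;> exact congrArg v (by decide)]
  rw [show ((-1 : ℤ) ^ (((1 : Fin 2)) : ℕ)) = -1 from by decide]
  simp only [one_smul, neg_smul, one_zsmul]
  abel

lemma E3 {X W : Type*} [NormedAddCommGroup X] [NormedSpace ℝ X]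
    [NormedAddCommGroup W] [NormedSpace ℝ W]
    (ω : X → (Fin 2 → X) → W) (x : X) (v : Fin 3 → X) :
    extDerivRaw ω x v = fderiv ℝ (fun y => ω y ![v 1, v 2]) x (v 0) - fderiv ℝ (fun y => ω y ![v 0, v 2]) x (v 1) + fderiv ℝ (fun y => ω y ![v 0, v 1]) x (v 2) := by
  simp only [extDerivRaw]
  rw [Fin.sum_univ_three]
  rw [show (v ∘ Fin.succAbove (0 : Fin 3)) = ![v 1, v 2] from by funext i; fin_cases i <;> exact congrArg v (by decide)]
  rw [show ((-1 : ℤ) ^ (((0 : Fin 3)) : ℕ)) = 1 from by decide]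
  rw [show (v ∘ Fin.succAbove (1 : Fin 3)) = ![v 0, v 2] from by funext i; fin_cases i <;> exact congrArg v (by decide)]
  rw [show ((-1 : ℤ) ^ (((1 : Fin 3)) : ℕ)) = -1 from by decide]
  rw [show (v ∘ Fin.succAbove (2 : Fin 3)) = ![v 0, v 1] from by funext i; fin_cases i <;> exact congrArg v (by decide)]
  rw [show ((-1 : ℤ) ^ (((2 : Fin 3)) : ℕ)) = 1 from by decide]
  simp only [one_smul, neg_smul, one_zsmul]
  abel

lemma E4 {X W : Type*} [NormedAddCommGroup X] [NormedSpace ℝ X]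
    [NormedAddCommGroup W] [NormedSpace ℝ W]
    (ω : X → (Fin 3 → X) → W) (x : X) (v : Fin 4 → X) :
    extDerivRaw ω x v = fderiv ℝ (fun y => ω y ![v 1, v 2, v 3]) x (v 0) - fderiv ℝ (fun y => ω y ![v 0, v 2, v 3]) x (v 1) + fderiv ℝ (fun y => ω y ![v 0, v 1, v 3]) x (v 2) - fderiv ℝ (fun y => ω y ![v 0, v 1, v 2]) x (v 3) := by
  simp only [extDerivRaw]
  rw [Fin.sum_univ_four]
  rw [show (v ∘ Fin.succAbove (0 : Fin 4)) = ![v 1, v 2, v 3] from by funext i; fin_cases i <;> exact congrArg v (by decide)]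
  rw [show ((-1 : ℤ) ^ (((0 : Fin 4)) : ℕ)) = 1 from by decide]
  rw [show (v ∘ Fin.succAbove (1 : Fin 4)) = ![v 0, v 2, v 3] from by funext i; fin_cases i <;> exact congrArg v (by decide)]
  rw [show ((-1 : ℤ) ^ (((1 : Fin 4)) : ℕ)) = -1 from by decide]
  rw [show (v ∘ Fin.succAbove (2 : Fin 4)) = ![v 0, v 1, v 3] from by funext i; fin_cases i <;> exact congrArg v (by decide)]
  rw [show ((-1 : ℤ) ^ (((2 : Fin 4)) : ℕ)) = 1 from by decide]
  rw [show (v ∘ Fin.succAbove (3 : Fin 4)) = ![v 0, v 1, v 2] from by funext i; fin_cases i <;> exact congrArg v (by decide)]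
  rw [show ((-1 : ℤ) ^ (((3 : Fin 4)) : ℕ)) = -1 from by decide]
  simp only [one_smul, neg_smul, one_zsmul]
  abel

lemma E5 {X W : Type*} [NormedAddCommGroup X] [NormedSpace ℝ X]
    [NormedAddCommGroup W] [NormedSpace ℝ W]
    (ω : X → (Fin 4 → X) → W) (x : X) (v : Fin 5 → X) :
    extDerivRaw ω x v = fderiv ℝ (fun y => ω y ![v 1, v 2, v 3, v 4]) x (v 0) - fderiv ℝ (fun y => ω y ![v 0, v 2, v 3, v 4]) x (v 1) + fderiv ℝ (fun y => ω y ![v 0, v 1, v 3, v 4]) x (v 2) - fderiv ℝ (fun y => ω y ![v 0, v 1, v 2, v 4]) x (v 3) + fderiv ℝ (fun y => ω y ![v 0, v 1, v 2, v 3]) x (v 4) := by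
  simp only [extDerivRaw]
  rw [Fin.sum_univ_five]
  rw [show (v ∘ Fin.succAbove (0 : Fin 5)) = ![v 1, v 2, v 3, v 4] from by funext i; fin_cases i <;> exact congrArg v (by decide)]
  rw [show ((-1 : ℤ) ^ (((0 : Fin 5)) : ℕ)) = 1 from by decide]
  rw [show (v ∘ Fin.succAbove (1 : Fin 5)) = ![v 0, v 2, v 3, v 4] from by funext i; fin_cases i <;> exact congrArg v (by decide)]
  rw [show ((-1 : ℤ) ^ (((1 : Fin 5)) : ℕ)) = -1 from by decide]
  rw [show (v ∘ Fin.succAbove (2 : Fin 5)) = ![v 0, v 1, v 3, v 4] from by funext i; fin_cases i <;> exact congrArg v (by decide)]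
  rw [show ((-1 : ℤ) ^ (((2 : Fin 5)) : ℕ)) = 1 from by decide]
  rw [show (v ∘ Fin.succAbove (3 : Fin 5)) = ![v 0, v 1, v 2, v 4] from by funext i; fin_cases i <;> exact congrArg v (by decide)]
  rw [show ((-1 : ℤ) ^ (((3 : Fin 5)) : ℕ)) = -1 from by decide]
  rw [show (v ∘ Fin.succAbove (4 : Fin 5)) = ![v 0, v 1, v 2, v 3] from by funext i; fin_cases i <;> exact congrArg v (by decide)]
  rw [show ((-1 : ℤ) ^ (((4 : Fin 5)) : ℕ)) = 1 from by decide]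
  simp only [one_smul, neg_smul, one_zsmul]
  abel


section Calc
open scoped Topology

variable {X : Type*} [NormedAddCommGroup X] [NormedSpace ℝ X]
variable {E : Type*} [NormedAddCommGroup E] [NormedSpace ℝ E]
variable {F : Type*} [NormedAddCommGroup F] [NormedSpace ℝ F]
variable {W : Type*} [NormedAddCommGroup W] [NormedSpace ℝ W]

noncomputable def toCLM2 [FiniteDimensional ℝ E] [FiniteDimensional ℝ F]
    (μ : E →ₗ[ℝ] F →ₗ[ℝ] W) : E →L[ℝ] F →L[ℝ] W :=
  LinearMap.toContinuousLinearMap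
  { toFun := fun e => LinearMap.toContinuousLinearMap (μ e)
    map_add' := by intros; ext; simp
    map_smul' := by intros; ext; simp }

lemma toCLM2_apply [FiniteDimensional ℝ E] [FiniteDimensional ℝ F]
    (μ : E →ₗ[ℝ] F →ₗ[ℝ] W) (e : E) (f : F) : toCLM2 μ e f = μ e f := rfl

variable [FiniteDimensional ℝ E] [FiniteDimensional ℝ F]

lemma bilin_hasFDerivAt (μ : E →ₗ[ℝ] F →ₗ[ℝ] W) {f : X → E} {g : X → F} {x : X}
    (hf : DifferentiableAt ℝ f x) (hg : DifferentiableAt ℝ g x) :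
    HasFDerivAt (fun y => μ (f y) (g y))
      (((toCLM2 μ).isBoundedBilinearMap.deriv (f x, g x)).comp
        ((fderiv ℝ f x).prod (fderiv ℝ g x))) x :=
  by have := ((toCLM2 μ).isBoundedBilinearMap.hasFDerivAt (f x, g x)).comp x
      (hf.hasFDerivAt.prodMk hg.hasFDerivAt); exact this

lemma bilin_diffAt (μ : E →ₗ[ℝ] F →ₗ[ℝ] W) {f : X → E} {g : X → F} {x : X}
    (hf : DifferentiableAt ℝ f x) (hg : DifferentiableAt ℝ g x) :
    DifferentiableAt ℝ (fun y => μ (f y) (g y)) x :=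
  (bilin_hasFDerivAt μ hf hg).differentiableAt

lemma fderiv_bilin (μ : E →ₗ[ℝ] F →ₗ[ℝ] W) {f : X → E} {g : X → F} {x : X}
    (hf : DifferentiableAt ℝ f x) (hg : DifferentiableAt ℝ g x) (t : X) :
    fderiv ℝ (fun y => μ (f y) (g y)) x t
      = μ (fderiv ℝ f x t) (g x) + μ (f x) (fderiv ℝ g x t) := by
  rw [(bilin_hasFDerivAt μ hf hg).fderiv]
  simp only [IsBoundedBilinearMap.deriv]
  rw [add_comm]; rfl

/-- Differentiability of a wedge of pointwise-differentiable form families. -/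
lemma diff_wedge {k₁ k₂ : ℕ} (μ : E →ₗ[ℝ] F →ₗ[ℝ] W)
    {φ : X → (Fin k₁ → X) → E} {ψ : X → (Fin k₂ → X) → F} {x : X}
    (hφ : ∀ w, DifferentiableAt ℝ (fun y => φ y w) x)
    (hψ : ∀ w, DifferentiableAt ℝ (fun y => ψ y w) x)
    (w : Fin (k₁ + k₂) → X) :
    DifferentiableAt ℝ (fun y => wedgeRaw μ (φ y) (ψ y) w) x := by
  simp only [wedgeRaw]
  exact DifferentiableAt.fun_sum fun σ _ =>
    (bilin_diffAt μ (hφ _) (hψ _)).const_smul ((Equiv.Perm.sign σ : ℤ))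

lemma fderiv_wedge {k₁ k₂ : ℕ} (μ : E →ₗ[ℝ] F →ₗ[ℝ] W)
    {φ : X → (Fin k₁ → X) → E} {ψ : X → (Fin k₂ → X) → F} {x : X}
    (hφ : ∀ w, DifferentiableAt ℝ (fun y => φ y w) x)
    (hψ : ∀ w, DifferentiableAt ℝ (fun y => ψ y w) x)
    (w : Fin (k₁ + k₂) → X) (t : X) :
    fderiv ℝ (fun y => wedgeRaw μ (φ y) (ψ y) w) x t
      = wedgeRaw μ (fun w' => fderiv ℝ (fun y => φ y w') x t) (ψ x) w
        + wedgeRaw μ (φ x) (fun w' => fderiv ℝ (fun y => ψ y w') x t) w := by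
  simp only [wedgeRaw]
  rw [fderiv_fun_sum (A := fun σ y => ((Equiv.Perm.sign σ : ℤ)) • μ (φ y fun i => w (σ (Fin.castAdd k₂ i))) (ψ y fun i => w (σ (Fin.natAdd k₁ i)))) fun σ _ => (bilin_diffAt μ (hφ _) (hψ _)).const_smul ((Equiv.Perm.sign σ : ℤ))]
  rw [ContinuousLinearMap.coe_sum', Finset.sum_apply, ← Finset.sum_add_distrib]
  refine Finset.sum_congr rfl fun σ _ => ?_
  rw [fderiv_fun_const_smul (bilin_diffAt μ (hφ _) (hψ _))]
  rw [ContinuousLinearMap.coe_smul', Pi.smul_apply, fderiv_bilin μ (hφ _) (hψ _) t,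
    smul_add]

/-- Differentiability of the exterior derivative of a family with differentiable
first partial derivatives. -/
lemma diff_extDeriv {k : ℕ} {ω : X → (Fin k → X) → W} {x : X}
    (hω : ∀ w u, DifferentiableAt ℝ (fun y => fderiv ℝ (fun z => ω z w) y u) x)
    (w : Fin (k + 1) → X) :
    DifferentiableAt ℝ (fun y => extDerivRaw ω y w) x := by
  simp only [extDerivRaw]
  exact DifferentiableAt.fun_sum fun i _ => (hω _ _).const_smul ((-1 : ℤ) ^ (i : ℕ))

lemma fderiv_extDeriv {k : ℕ} {ω : X → (Fin k → X) → W} {x : X}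
    (hω : ∀ w u, DifferentiableAt ℝ (fun y => fderiv ℝ (fun z => ω z w) y u) x)
    (w : Fin (k + 1) → X) (t : X) :
    fderiv ℝ (fun y => extDerivRaw ω y w) x t
      = ∑ i : Fin (k + 1), (-1 : ℤ) ^ (i : ℕ) •
          fderiv ℝ (fun y => fderiv ℝ (fun z => ω z (w ∘ i.succAbove)) y (w i)) x t := by
  simp only [extDerivRaw]
  rw [fderiv_fun_sum (A := fun (i : Fin (k + 1)) y => ((-1 : ℤ) ^ (i : ℕ)) • fderiv ℝ (fun z => ω z (w ∘ i.succAbove)) y (w i)) fun i _ => (hω _ _).const_smul ((-1 : ℤ) ^ (i : ℕ))]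
  rw [ContinuousLinearMap.coe_sum', Finset.sum_apply]
  refine Finset.sum_congr rfl fun i _ => ?_
  rw [fderiv_fun_const_smul (hω _ _)]
  rfl

/-- Algebraic lemmas for `wedgeRaw` and `extDerivRaw`. -/
lemma wedge_add_right {V : Type*} {k₁ k₂ : ℕ} (μ : E →ₗ[ℝ] F →ₗ[ℝ] W)
    (ω : (Fin k₁ → V) → E) (η η' : (Fin k₂ → V) → F) :
    wedgeRaw μ ω (η + η') = wedgeRaw μ ω η + wedgeRaw μ ω η' := by
  funext v
  simp only [wedgeRaw, Pi.add_apply, map_add, smul_add, Finset.sum_add_distrib]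

lemma wedge_add_left {V : Type*} {k₁ k₂ : ℕ} (μ : E →ₗ[ℝ] F →ₗ[ℝ] W)
    (ω ω' : (Fin k₁ → V) → E) (η : (Fin k₂ → V) → F) :
    wedgeRaw μ (ω + ω') η = wedgeRaw μ ω η + wedgeRaw μ ω' η := by
  funext v
  simp only [wedgeRaw, Pi.add_apply, map_add, LinearMap.add_apply, smul_add,
    Finset.sum_add_distrib]

lemma wedge_smul_right {V : Type*} {k₁ k₂ : ℕ} (μ : E →ₗ[ℝ] F →ₗ[ℝ] W)
    (c : ℝ) (ω : (Fin k₁ → V) → E) (η : (Fin k₂ → V) → F) :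
    wedgeRaw μ ω (c • η) = c • wedgeRaw μ ω η := by
  funext v
  simp only [wedgeRaw, Pi.smul_apply, map_smul, Finset.smul_sum]
  exact Finset.sum_congr rfl fun σ _ => smul_comm _ _ _

lemma wedge_smul_left {V : Type*} {k₁ k₂ : ℕ} (μ : E →ₗ[ℝ] F →ₗ[ℝ] W)
    (c : ℝ) (ω : (Fin k₁ → V) → E) (η : (Fin k₂ → V) → F) :
    wedgeRaw μ (c • ω) η = c • wedgeRaw μ ω η := by
  funext v
  simp only [wedgeRaw, Pi.smul_apply, map_smul, LinearMap.smul_apply, Finset.smul_sum]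
  exact Finset.sum_congr rfl fun σ _ => smul_comm _ _ _

lemma extDerivRaw_add {k : ℕ} {f g : X → (Fin k → X) → W} {x : X}
    (hf : ∀ w, DifferentiableAt ℝ (fun y => f y w) x)
    (hg : ∀ w, DifferentiableAt ℝ (fun y => g y w) x) :
    extDerivRaw (fun z => f z + g z) x = extDerivRaw f x + extDerivRaw g x := by
  funext v
  simp only [extDerivRaw, Pi.add_apply, ← Finset.sum_add_distrib]
  refine Finset.sum_congr rfl fun i _ => ?_
  rw [fderiv_fun_add (hf _) (hg _), ContinuousLinearMap.add_apply, smul_add]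

lemma extDerivRaw_smul {k : ℕ} {f : X → (Fin k → X) → W} {x : X} (c : ℝ)
    (hf : ∀ w, DifferentiableAt ℝ (fun y => f y w) x) :
    extDerivRaw (fun z => c • f z) x = c • extDerivRaw f x := by
  funext v
  simp only [extDerivRaw, Pi.smul_apply, Finset.smul_sum]
  refine Finset.sum_congr rfl fun i _ => ?_
  rw [fderiv_fun_const_smul (hf _) c, ContinuousLinearMap.coe_smul', Pi.smul_apply]
  exact smul_comm _ _ _

end Calc


lemma cv1_0 {α : Type*} (a0 : α) : (![a0] : Fin 1 → α) 0 = a0 := rfl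
lemma cv2_0 {α : Type*} (a0 a1 : α) : (![a0, a1] : Fin 2 → α) 0 = a0 := rfl
lemma cv2_1 {α : Type*} (a0 a1 : α) : (![a0, a1] : Fin 2 → α) 1 = a1 := rfl
lemma cv3_0 {α : Type*} (a0 a1 a2 : α) : (![a0, a1, a2] : Fin 3 → α) 0 = a0 := rfl
lemma cv3_1 {α : Type*} (a0 a1 a2 : α) : (![a0, a1, a2] : Fin 3 → α) 1 = a1 := rfl
lemma cv3_2 {α : Type*} (a0 a1 a2 : α) : (![a0, a1, a2] : Fin 3 → α) 2 = a2 := rfl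
lemma cv4_0 {α : Type*} (a0 a1 a2 a3 : α) : (![a0, a1, a2, a3] : Fin 4 → α) 0 = a0 := rfl
lemma cv4_1 {α : Type*} (a0 a1 a2 a3 : α) : (![a0, a1, a2, a3] : Fin 4 → α) 1 = a1 := rfl
lemma cv4_2 {α : Type*} (a0 a1 a2 a3 : α) : (![a0, a1, a2, a3] : Fin 4 → α) 2 = a2 := rfl
lemma cv4_3 {α : Type*} (a0 a1 a2 a3 : α) : (![a0, a1, a2, a3] : Fin 4 → α) 3 = a3 := rfl

-- simp set: cv1_0, cv2_0, cv2_1, cv3_0, cv3_1, cv3_2, cv4_0, cv4_1, cv4_2, cv4_3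

lemma fdE1 {X W : Type*} [NormedAddCommGroup X] [NormedSpace ℝ X]
    [NormedAddCommGroup W] [NormedSpace ℝ W] {ω : X → (Fin 1 → X) → W} {x : X}
    (hd : ∀ w u, DifferentiableAt ℝ (fun y => fderiv ℝ (fun z => ω z w) y u) x)
    (w : Fin 2 → X) (t : X) :
    fderiv ℝ (fun y => extDerivRaw ω y w) x t = fderiv ℝ (fun y => fderiv ℝ (fun z => ω z ![w 1]) y (w 0)) x t - fderiv ℝ (fun y => fderiv ℝ (fun z => ω z ![w 0]) y (w 1)) x t := by
  rw [fderiv_extDeriv hd w t, Fin.sum_univ_two]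
  rw [show (w ∘ Fin.succAbove (0 : Fin 2)) = ![w 1] from by funext i; fin_cases i <;> exact congrArg w (by decide)]
  rw [show ((-1 : ℤ) ^ (((0 : Fin 2)) : ℕ)) = 1 from by decide]
  rw [show (w ∘ Fin.succAbove (1 : Fin 2)) = ![w 0] from by funext i; fin_cases i <;> exact congrArg w (by decide)]
  rw [show ((-1 : ℤ) ^ (((1 : Fin 2)) : ℕ)) = -1 from by decide]
  simp only [one_smul, neg_smul, one_zsmul]
  abel

lemma fdE2 {X W : Type*} [NormedAddCommGroup X] [NormedSpace ℝ X]
    [NormedAddCommGroup W] [NormedSpace ℝ W] {ω : X → (Fin 2 → X) → W} {x : X}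
    (hd : ∀ w u, DifferentiableAt ℝ (fun y => fderiv ℝ (fun z => ω z w) y u) x)
    (w : Fin 3 → X) (t : X) :
    fderiv ℝ (fun y => extDerivRaw ω y w) x t = fderiv ℝ (fun y => fderiv ℝ (fun z => ω z ![w 1, w 2]) y (w 0)) x t - fderiv ℝ (fun y => fderiv ℝ (fun z => ω z ![w 0, w 2]) y (w 1)) x t + fderiv ℝ (fun y => fderiv ℝ (fun z => ω z ![w 0, w 1]) y (w 2)) x t := by
  rw [fderiv_extDeriv hd w t, Fin.sum_univ_three]
  rw [show (w ∘ Fin.succAbove (0 : Fin 3)) = ![w 1, w 2] from by funext i; fin_cases i <;> exact congrArg w (by decide)]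
  rw [show ((-1 : ℤ) ^ (((0 : Fin 3)) : ℕ)) = 1 from by decide]
  rw [show (w ∘ Fin.succAbove (1 : Fin 3)) = ![w 0, w 2] from by funext i; fin_cases i <;> exact congrArg w (by decide)]
  rw [show ((-1 : ℤ) ^ (((1 : Fin 3)) : ℕ)) = -1 from by decide]
  rw [show (w ∘ Fin.succAbove (2 : Fin 3)) = ![w 0, w 1] from by funext i; fin_cases i <;> exact congrArg w (by decide)]
  rw [show ((-1 : ℤ) ^ (((2 : Fin 3)) : ℕ)) = 1 from by decide]
  simp only [one_smul, neg_smul, one_zsmul]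
  abel

lemma fdE3 {X W : Type*} [NormedAddCommGroup X] [NormedSpace ℝ X]
    [NormedAddCommGroup W] [NormedSpace ℝ W] {ω : X → (Fin 3 → X) → W} {x : X}
    (hd : ∀ w u, DifferentiableAt ℝ (fun y => fderiv ℝ (fun z => ω z w) y u) x)
    (w : Fin 4 → X) (t : X) :
    fderiv ℝ (fun y => extDerivRaw ω y w) x t = fderiv ℝ (fun y => fderiv ℝ (fun z => ω z ![w 1, w 2, w 3]) y (w 0)) x t - fderiv ℝ (fun y => fderiv ℝ (fun z => ω z ![w 0, w 2, w 3]) y (w 1)) x t + fderiv ℝ (fun y => fderiv ℝ (fun z => ω z ![w 0, w 1, w 3]) y (w 2)) x t - fderiv ℝ (fun y => fderiv ℝ (fun z => ω z ![w 0, w 1, w 2]) y (w 3)) x t := by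
  rw [fderiv_extDeriv hd w t, Fin.sum_univ_four]
  rw [show (w ∘ Fin.succAbove (0 : Fin 4)) = ![w 1, w 2, w 3] from by funext i; fin_cases i <;> exact congrArg w (by decide)]
  rw [show ((-1 : ℤ) ^ (((0 : Fin 4)) : ℕ)) = 1 from by decide]
  rw [show (w ∘ Fin.succAbove (1 : Fin 4)) = ![w 0, w 2, w 3] from by funext i; fin_cases i <;> exact congrArg w (by decide)]
  rw [show ((-1 : ℤ) ^ (((1 : Fin 4)) : ℕ)) = -1 from by decide]
  rw [show (w ∘ Fin.succAbove (2 : Fin 4)) = ![w 0, w 1, w 3] from by funext i; fin_cases i <;> exact congrArg w (by decide)]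
  rw [show ((-1 : ℤ) ^ (((2 : Fin 4)) : ℕ)) = 1 from by decide]
  rw [show (w ∘ Fin.succAbove (3 : Fin 4)) = ![w 0, w 1, w 2] from by funext i; fin_cases i <;> exact congrArg w (by decide)]
  rw [show ((-1 : ℤ) ^ (((3 : Fin 4)) : ℕ)) = -1 from by decide]
  simp only [one_smul, neg_smul, one_zsmul]
  abel

lemma dd_zero1 {X W : Type*} [NormedAddCommGroup X] [NormedSpace ℝ X]
    [NormedAddCommGroup W] [NormedSpace ℝ W] (ω : X → (Fin 1 → X) → W) (x : X)
    (hd : ∀ w u, DifferentiableAt ℝ (fun y => fderiv ℝ (fun z => ω z w) y u) x)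
    (hs : ∀ w u t, fderiv ℝ (fun y => fderiv ℝ (fun z => ω z w) y u) x t
      = fderiv ℝ (fun y => fderiv ℝ (fun z => ω z w) y t) x u)
    (v : Fin 3 → X) :
    extDerivRaw (fun z => extDerivRaw ω z) x v = 0 := by
  rw [E3 (fun z => extDerivRaw ω z) x v]
  beta_reduce
  rw [fdE1 hd ![v 1, v 2] (v 0)]
  rw [fdE1 hd ![v 0, v 2] (v 1)]
  rw [fdE1 hd ![v 0, v 1] (v 2)]
  simp only [cv1_0, cv2_0, cv2_1, cv3_0, cv3_1, cv3_2, cv4_0, cv4_1, cv4_2, cv4_3]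
  rw [hs ![v 2] (v 0) (v 1)]
  rw [hs ![v 1] (v 0) (v 2)]
  rw [hs ![v 0] (v 1) (v 2)]
  abel

lemma dd_zero2 {X W : Type*} [NormedAddCommGroup X] [NormedSpace ℝ X]
    [NormedAddCommGroup W] [NormedSpace ℝ W] (ω : X → (Fin 2 → X) → W) (x : X)
    (hd : ∀ w u, DifferentiableAt ℝ (fun y => fderiv ℝ (fun z => ω z w) y u) x)
    (hs : ∀ w u t, fderiv ℝ (fun y => fderiv ℝ (fun z => ω z w) y u) x t
      = fderiv ℝ (fun y => fderiv ℝ (fun z => ω z w) y t) x u)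
    (v : Fin 4 → X) :
    extDerivRaw (fun z => extDerivRaw ω z) x v = 0 := by
  rw [E4 (fun z => extDerivRaw ω z) x v]
  beta_reduce
  rw [fdE2 hd ![v 1, v 2, v 3] (v 0)]
  rw [fdE2 hd ![v 0, v 2, v 3] (v 1)]
  rw [fdE2 hd ![v 0, v 1, v 3] (v 2)]
  rw [fdE2 hd ![v 0, v 1, v 2] (v 3)]
  simp only [cv1_0, cv2_0, cv2_1, cv3_0, cv3_1, cv3_2, cv4_0, cv4_1, cv4_2, cv4_3]
  rw [hs ![v 2, v 3] (v 0) (v 1)]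
  rw [hs ![v 1, v 3] (v 0) (v 2)]
  rw [hs ![v 0, v 3] (v 1) (v 2)]
  rw [hs ![v 1, v 2] (v 0) (v 3)]
  rw [hs ![v 0, v 2] (v 1) (v 3)]
  rw [hs ![v 0, v 1] (v 2) (v 3)]
  abel

lemma dd_zero3 {X W : Type*} [NormedAddCommGroup X] [NormedSpace ℝ X]
    [NormedAddCommGroup W] [NormedSpace ℝ W] (ω : X → (Fin 3 → X) → W) (x : X)
    (hd : ∀ w u, DifferentiableAt ℝ (fun y => fderiv ℝ (fun z => ω z w) y u) x)
    (hs : ∀ w u t, fderiv ℝ (fun y => fderiv ℝ (fun z => ω z w) y u) x t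
      = fderiv ℝ (fun y => fderiv ℝ (fun z => ω z w) y t) x u)
    (v : Fin 5 → X) :
    extDerivRaw (fun z => extDerivRaw ω z) x v = 0 := by
  rw [E5 (fun z => extDerivRaw ω z) x v]
  beta_reduce
  rw [fdE3 hd ![v 1, v 2, v 3, v 4] (v 0)]
  rw [fdE3 hd ![v 0, v 2, v 3, v 4] (v 1)]
  rw [fdE3 hd ![v 0, v 1, v 3, v 4] (v 2)]
  rw [fdE3 hd ![v 0, v 1, v 2, v 4] (v 3)]
  rw [fdE3 hd ![v 0, v 1, v 2, v 3] (v 4)]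
  simp only [cv1_0, cv2_0, cv2_1, cv3_0, cv3_1, cv3_2, cv4_0, cv4_1, cv4_2, cv4_3]
  rw [hs ![v 2, v 3, v 4] (v 0) (v 1)]
  rw [hs ![v 1, v 3, v 4] (v 0) (v 2)]
  rw [hs ![v 0, v 3, v 4] (v 1) (v 2)]
  rw [hs ![v 1, v 2, v 4] (v 0) (v 3)]
  rw [hs ![v 0, v 2, v 4] (v 1) (v 3)]
  rw [hs ![v 0, v 1, v 4] (v 2) (v 3)]
  rw [hs ![v 1, v 2, v 3] (v 0) (v 4)]
  rw [hs ![v 0, v 2, v 3] (v 1) (v 4)]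
  rw [hs ![v 0, v 1, v 3] (v 2) (v 4)]
  rw [hs ![v 0, v 1, v 2] (v 3) (v 4)]
  abel


lemma leib11 {X E F W : Type*} [NormedAddCommGroup X] [NormedSpace ℝ X]
    [NormedAddCommGroup E] [NormedSpace ℝ E] [FiniteDimensional ℝ E]
    [NormedAddCommGroup F] [NormedSpace ℝ F] [FiniteDimensional ℝ F]
    [NormedAddCommGroup W] [NormedSpace ℝ W]
    (μ : E →ₗ[ℝ] F →ₗ[ℝ] W) (φ : X → (Fin 1 → X) → E) (ψ : X → (Fin 1 → X) → F) (x : X)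
    (hφ : ∀ w, DifferentiableAt ℝ (fun y => φ y w) x)
    (hψ : ∀ w, DifferentiableAt ℝ (fun y => ψ y w) x) (v : Fin 3 → X) :
    extDerivRaw (fun z => wedgeRaw μ (φ z) (ψ z)) x v
      = wedgeRaw μ (extDerivRaw φ x) (ψ x) v - wedgeRaw μ (φ x) (extDerivRaw ψ x) v := by
  rw [E3 (fun z => wedgeRaw μ (φ z) (ψ z)) x v]
  simp only [fderiv_wedge μ hφ hψ]
  simp only [W11, W12, W21, W13, W22, W14, W23, W32, cv1_0, cv2_0, cv2_1, cv3_0, cv3_1, cv3_2, cv4_0, cv4_1, cv4_2, cv4_3]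
  simp only [E2, E3, E4, E5, cv1_0, cv2_0, cv2_1, cv3_0, cv3_1, cv3_2, cv4_0, cv4_1, cv4_2, cv4_3]
  simp only [map_add, map_sub, LinearMap.add_apply, LinearMap.sub_apply]
  abel

lemma leib12 {X E F W : Type*} [NormedAddCommGroup X] [NormedSpace ℝ X]
    [NormedAddCommGroup E] [NormedSpace ℝ E] [FiniteDimensional ℝ E]
    [NormedAddCommGroup F] [NormedSpace ℝ F] [FiniteDimensional ℝ F]
    [NormedAddCommGroup W] [NormedSpace ℝ W]
    (μ : E →ₗ[ℝ] F →ₗ[ℝ] W) (φ : X → (Fin 1 → X) → E) (ψ : X → (Fin 2 → X) → F) (x : X)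
    (hφ : ∀ w, DifferentiableAt ℝ (fun y => φ y w) x)
    (hψ : ∀ w, DifferentiableAt ℝ (fun y => ψ y w) x) (v : Fin 4 → X) :
    extDerivRaw (fun z => wedgeRaw μ (φ z) (ψ z)) x v
      = wedgeRaw μ (extDerivRaw φ x) (ψ x) v - wedgeRaw μ (φ x) (extDerivRaw ψ x) v := by
  rw [E4 (fun z => wedgeRaw μ (φ z) (ψ z)) x v]
  simp only [fderiv_wedge μ hφ hψ]
  simp only [W11, W12, W21, W13, W22, W14, W23, W32, cv1_0, cv2_0, cv2_1, cv3_0, cv3_1, cv3_2, cv4_0, cv4_1, cv4_2, cv4_3]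
  simp only [E2, E3, E4, E5, cv1_0, cv2_0, cv2_1, cv3_0, cv3_1, cv3_2, cv4_0, cv4_1, cv4_2, cv4_3]
  simp only [map_add, map_sub, LinearMap.add_apply, LinearMap.sub_apply]
  abel

lemma leib22 {X E F W : Type*} [NormedAddCommGroup X] [NormedSpace ℝ X]
    [NormedAddCommGroup E] [NormedSpace ℝ E] [FiniteDimensional ℝ E]
    [NormedAddCommGroup F] [NormedSpace ℝ F] [FiniteDimensional ℝ F]
    [NormedAddCommGroup W] [NormedSpace ℝ W]
    (μ : E →ₗ[ℝ] F →ₗ[ℝ] W) (φ : X → (Fin 2 → X) → E) (ψ : X → (Fin 2 → X) → F) (x : X)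
    (hφ : ∀ w, DifferentiableAt ℝ (fun y => φ y w) x)
    (hψ : ∀ w, DifferentiableAt ℝ (fun y => ψ y w) x) (v : Fin 5 → X) :
    extDerivRaw (fun z => wedgeRaw μ (φ z) (ψ z)) x v
      = wedgeRaw μ (extDerivRaw φ x) (ψ x) v + wedgeRaw μ (φ x) (extDerivRaw ψ x) v := by
  rw [E5 (fun z => wedgeRaw μ (φ z) (ψ z)) x v]
  simp only [fderiv_wedge μ hφ hψ]
  simp only [W11, W12, W21, W13, W22, W14, W23, W32, cv1_0, cv2_0, cv2_1, cv3_0, cv3_1, cv3_2, cv4_0, cv4_1, cv4_2, cv4_3]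
  simp only [E2, E3, E4, E5, cv1_0, cv2_0, cv2_1, cv3_0, cv3_1, cv3_2, cv4_0, cv4_1, cv4_2, cv4_3]
  simp only [map_add, map_sub, LinearMap.add_apply, LinearMap.sub_apply]
  abel

lemma leib13 {X E F W : Type*} [NormedAddCommGroup X] [NormedSpace ℝ X]
    [NormedAddCommGroup E] [NormedSpace ℝ E] [FiniteDimensional ℝ E]
    [NormedAddCommGroup F] [NormedSpace ℝ F] [FiniteDimensional ℝ F]
    [NormedAddCommGroup W] [NormedSpace ℝ W]
    (μ : E →ₗ[ℝ] F →ₗ[ℝ] W) (φ : X → (Fin 1 → X) → E) (ψ : X → (Fin 3 → X) → F) (x : X)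
    (hφ : ∀ w, DifferentiableAt ℝ (fun y => φ y w) x)
    (hψ : ∀ w, DifferentiableAt ℝ (fun y => ψ y w) x) (v : Fin 5 → X) :
    extDerivRaw (fun z => wedgeRaw μ (φ z) (ψ z)) x v
      = wedgeRaw μ (extDerivRaw φ x) (ψ x) v - wedgeRaw μ (φ x) (extDerivRaw ψ x) v := by
  rw [E5 (fun z => wedgeRaw μ (φ z) (ψ z)) x v]
  simp only [fderiv_wedge μ hφ hψ]
  simp only [W11, W12, W21, W13, W22, W14, W23, W32, cv1_0, cv2_0, cv2_1, cv3_0, cv3_1, cv3_2, cv4_0, cv4_1, cv4_2, cv4_3]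
  simp only [E2, E3, E4, E5, cv1_0, cv2_0, cv2_1, cv3_0, cv3_1, cv3_2, cv4_0, cv4_1, cv4_2, cv4_3]
  simp only [map_add, map_sub, LinearMap.add_apply, LinearMap.sub_apply]
  abel


section Plemmas
variable {V : Type*} {g h l : Type*}
  [AddCommGroup g] [Module ℝ g] [AddCommGroup h] [Module ℝ h] [AddCommGroup l] [Module ℝ l]

lemma p1 (br : g →ₗ[ℝ] g →ₗ[ℝ] g) (hanti : ∀ X Y, br X Y = - br Y X)
    (F : (Fin 2 → V) → g) (a : (Fin 1 → V) → g) (v : Fin 3 → V) :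
    wedgeRaw br F a v + wedgeRaw br a F v = 0 := by
  rw [W21, W12]
  rw [hanti (a ![v 0]) (F ![v 1, v 2]), hanti (a ![v 1]) (F ![v 0, v 2]),
    hanti (a ![v 2]) (F ![v 0, v 1])]
  abel

lemma p2 (br : g →ₗ[ℝ] g →ₗ[ℝ] g) (hanti : ∀ X Y, br X Y = - br Y X)
    (hjac : ∀ X Y Z, br X (br Y Z) = br (br X Y) Z + br Y (br X Z))
    (a : (Fin 1 → V) → g) (v : Fin 3 → V) :
    wedgeRaw br a (wedgeRaw br a a) v = 0 := by
  rw [W12]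
  simp only [W11, cv1_0, cv2_0, cv2_1, map_sub, LinearMap.sub_apply]
  rw [hanti (a ![v 2]) (a ![v 1]), hanti (a ![v 2]) (a ![v 0]), hanti (a ![v 1]) (a ![v 0])]
  simp only [map_neg, LinearMap.neg_apply]
  rw [hjac (a ![v 0]) (a ![v 1]) (a ![v 2])]
  rw [hanti (br (a ![v 0]) (a ![v 1])) (a ![v 2])]
  abel

lemma p3 (br : g →ₗ[ℝ] g →ₗ[ℝ] g) (ρh : g →ₗ[ℝ] h →ₗ[ℝ] h)
    (hact : ∀ X X' Y, ρh (br X X') Y = ρh X (ρh X' Y) - ρh X' (ρh X Y))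
    (a : (Fin 1 → V) → g) (b : (Fin 2 → V) → h) (v : Fin 4 → V) :
    wedgeRaw ρh a (wedgeRaw ρh a b) v
      = (2 : ℝ)⁻¹ • wedgeRaw ρh (wedgeRaw br a a) b v := by
  rw [W13, W22]
  simp only [W12, W11, cv1_0, cv2_0, cv2_1, cv3_0, cv3_1, cv3_2,
    map_sub, map_add, LinearMap.sub_apply, LinearMap.add_apply]
  simp only [hact]
  module

lemma p4 (br : g →ₗ[ℝ] g →ₗ[ℝ] g) (ρl : g →ₗ[ℝ] l →ₗ[ℝ] l)
    (hact : ∀ X X' Z, ρl (br X X') Z = ρl X (ρl X' Z) - ρl X' (ρl X Z))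
    (a : (Fin 1 → V) → g) (c : (Fin 3 → V) → l) (v : Fin 5 → V) :
    wedgeRaw ρl a (wedgeRaw ρl a c) v
      = (2 : ℝ)⁻¹ • wedgeRaw ρl (wedgeRaw br a a) c v := by
  rw [W14, W23]
  simp only [W13, W11, cv1_0, cv2_0, cv2_1, cv3_0, cv3_1, cv3_2, cv4_0, cv4_1, cv4_2, cv4_3,
    map_sub, map_add, LinearMap.sub_apply, LinearMap.add_apply]
  simp only [hact]
  module

lemma p5 (ρh : g →ₗ[ℝ] h →ₗ[ℝ] h) (ρl : g →ₗ[ℝ] l →ₗ[ℝ] l) (pf : h →ₗ[ℝ] h →ₗ[ℝ] l)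
    (hder : ∀ X Y₁ Y₂, ρl X (pf Y₁ Y₂) = pf (ρh X Y₁) Y₂ + pf Y₁ (ρh X Y₂))
    (a : (Fin 1 → V) → g) (b : (Fin 2 → V) → h) (v : Fin 5 → V) :
    wedgeRaw ρl a (wedgeRaw pf b b) v
      = wedgeRaw pf (wedgeRaw ρh a b) b v + wedgeRaw pf b (wedgeRaw ρh a b) v := by
  rw [W14, W32, W23]
  simp only [W22, W12, cv1_0, cv2_0, cv2_1, cv3_0, cv3_1, cv3_2, cv4_0, cv4_1, cv4_2, cv4_3,
    map_sub, map_add, LinearMap.sub_apply, LinearMap.add_apply]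
  simp only [hder]
  abel

end Plemmas


section Smooth
open scoped Topology

lemma smooth_package {X W : Type*} [NormedAddCommGroup X] [NormedSpace ℝ X]
    [NormedAddCommGroup W] [NormedSpace ℝ W]
    {f : X → W} {U : Set X} (hU : IsOpen U) {x : X} (hx : x ∈ U)
    (hf : ContDiffOn ℝ (⊤ : ℕ∞) f U) :
    DifferentiableAt ℝ f x ∧
      (∀ u, DifferentiableAt ℝ (fun y => fderiv ℝ f y u) x) ∧
      (∀ u t, fderiv ℝ (fun y => fderiv ℝ f y u) x t
        = fderiv ℝ (fun y => fderiv ℝ f y t) x u) := by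
  have memU := hU.mem_nhds hx
  have hd1 : DifferentiableAt ℝ f x :=
    (hf.differentiableOn (by simp)).differentiableAt memU
  have hf' : ContDiffOn ℝ (⊤ : ℕ∞) (fderiv ℝ f) U := hf.fderiv_of_isOpen hU (by simp)
  have hdF : DifferentiableAt ℝ (fderiv ℝ f) x :=
    (hf'.differentiableOn (by simp)).differentiableAt memU
  have hd2 : ∀ u, DifferentiableAt ℝ (fun y => fderiv ℝ f y u) x := fun u =>
    hdF.clm_apply (differentiableAt_const u)
  refine ⟨hd1, hd2, ?_⟩
  have hev : ∀ᶠ y in 𝓝 x, HasFDerivAt f (fderiv ℝ f y) y := by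
    filter_upwards [hU.eventually_mem hx] with y hy
    exact ((hf.differentiableOn (by simp)).differentiableAt (hU.mem_nhds hy)).hasFDerivAt
  have hsym := second_derivative_symmetric_of_eventually hev hdF.hasFDerivAt
  have key : ∀ u, fderiv ℝ (fun y => fderiv ℝ f y u) x
      = (fderiv ℝ (fderiv ℝ f) x).flip u := by
    intro u
    rw [fderiv_clm_apply hdF (differentiableAt_const u)]
    ext t
    simp
  intro u t
  rw [key u, key t]
  exact hsym t u

end Smooth


/-- let `g` be a finite-dimensional real Lie algebra (bracket `br`,
alternating and Jacobi), `h`, `l` finite-dimensional real vector spaces, `α̃ : h → g`,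
`β̃ : l → h` linear, `▷ : g × h → h` and `▷ : g × l → l` bilinear Lie algebra actions,
`{,} : h × h → l` a `g`-equivariant bilinear map
(`X ▷ {Y₁,Y₂} = {X ▷ Y₁, Y₂} + {Y₁, X ▷ Y₂}`), with `α̃(X ▷ Y) = [X, α̃(Y)]` and
`β̃(X ▷ Z) = X ▷ β̃(Z)`. For a smooth `g`-valued 1-form `A`, a smooth `h`-valued 2-form
`B` and a smooth `l`-valued 3-form `C` on an open `U ⊆ ℝ^d`, with
`Ω₁ := dA + ½ A ∧^{[,]} A`, `Ω₂ := dB + A ∧^▷ B`, `Ω₃ := dC + A ∧^▷ C + B ∧^{{,}} B`,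
if `(A, B, C)` is fake-flat, i.e. `Ω₁ = α̃ ∘ B` and `Ω₂ = β̃ ∘ C` on `U`, then on `U`:
(i) `dΩ₁ + A ∧^{[,]} Ω₁ = 0`; (ii) `dΩ₂ + A ∧^▷ Ω₂ = Ω₁ ∧^▷ B`;
(iii) `dΩ₃ + A ∧^▷ Ω₃ = Ω₁ ∧^▷ C + Ω₂ ∧^{{,}} B + B ∧^{{,}} Ω₂`. -/
theorem stmt17 {d : ℕ} {g h l : Type*}
    [NormedAddCommGroup g] [NormedSpace ℝ g] [FiniteDimensional ℝ g]
    [NormedAddCommGroup h] [NormedSpace ℝ h] [FiniteDimensional ℝ h]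
    [NormedAddCommGroup l] [NormedSpace ℝ l] [FiniteDimensional ℝ l]
    (br : g →ₗ[ℝ] g →ₗ[ℝ] g)
    (br_alt : ∀ X : g, br X X = 0)
    (br_jacobi : ∀ X Y Z : g, br X (br Y Z) = br (br X Y) Z + br Y (br X Z))
    (αt : h →ₗ[ℝ] g) (βt : l →ₗ[ℝ] h)
    (ρh : g →ₗ[ℝ] h →ₗ[ℝ] h) (ρl : g →ₗ[ℝ] l →ₗ[ℝ] l)
    (hρh_action : ∀ (X X' : g) (Y : h),
      ρh (br X X') Y = ρh X (ρh X' Y) - ρh X' (ρh X Y))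
    (hρl_action : ∀ (X X' : g) (Z : l),
      ρl (br X X') Z = ρl X (ρl X' Z) - ρl X' (ρl X Z))
    (pf : h →ₗ[ℝ] h →ₗ[ℝ] l)
    (hpf_der : ∀ (X : g) (Y₁ Y₂ : h),
      ρl X (pf Y₁ Y₂) = pf (ρh X Y₁) Y₂ + pf Y₁ (ρh X Y₂))
    (hαρ : ∀ (X : g) (Y : h), αt (ρh X Y) = br X (αt Y))
    (hβρ : ∀ (X : g) (Z : l), βt (ρl X Z) = ρh X (βt Z))
    (U : Set (Fin d → ℝ)) (hU : IsOpen U)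
    (A : (Fin d → ℝ) → AlternatingMap ℝ (Fin d → ℝ) g (Fin 1))
    (B : (Fin d → ℝ) → AlternatingMap ℝ (Fin d → ℝ) h (Fin 2))
    (C : (Fin d → ℝ) → AlternatingMap ℝ (Fin d → ℝ) l (Fin 3))
    (hA : SmoothFormOn A U) (hB : SmoothFormOn B U) (hC : SmoothFormOn C U)
    (Ω₁ : (Fin d → ℝ) → (Fin 2 → (Fin d → ℝ)) → g)
    (hΩ₁ : ∀ y, Ω₁ y =
      extDerivRaw (fun z => ⇑(A z)) y + (2 : ℝ)⁻¹ • wedgeRaw br ⇑(A y) ⇑(A y))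
    (Ω₂ : (Fin d → ℝ) → (Fin 3 → (Fin d → ℝ)) → h)
    (hΩ₂ : ∀ y, Ω₂ y =
      extDerivRaw (fun z => ⇑(B z)) y + wedgeRaw ρh ⇑(A y) ⇑(B y))
    (Ω₃ : (Fin d → ℝ) → (Fin 4 → (Fin d → ℝ)) → l)
    (hΩ₃ : ∀ y, Ω₃ y =
      extDerivRaw (fun z => ⇑(C z)) y + wedgeRaw ρl ⇑(A y) ⇑(C y)
        + wedgeRaw pf ⇑(B y) ⇑(B y))
    (hflat₁ : ∀ x ∈ U, Ω₁ x = fun v => αt (B x v))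
    (hflat₂ : ∀ x ∈ U, Ω₂ x = fun v => βt (C x v)) :
    ∀ x ∈ U,
      (extDerivRaw Ω₁ x + wedgeRaw br ⇑(A x) (Ω₁ x) = 0)
      ∧ (extDerivRaw Ω₂ x + wedgeRaw ρh ⇑(A x) (Ω₂ x)
          = wedgeRaw ρh (Ω₁ x) ⇑(B x))
      ∧ (extDerivRaw Ω₃ x + wedgeRaw ρl ⇑(A x) (Ω₃ x)
          = wedgeRaw ρl (Ω₁ x) ⇑(C x) + wedgeRaw pf (Ω₂ x) ⇑(B x)
            + wedgeRaw pf ⇑(B x) (Ω₂ x)) := by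
  intro x hx
  have hanti : ∀ X Y : g, br X Y = - br Y X := by
    intro X Y
    have h2 : br X Y + br Y X = 0 := by
      have hXY := br_alt (X + Y)
      simpa [map_add, LinearMap.add_apply, br_alt X, br_alt Y, add_comm] using hXY
    exact eq_neg_of_add_eq_zero_left h2
  -- smoothness packages
  have HA := fun w => smooth_package hU hx (hA w)
  have HB := fun w => smooth_package hU hx (hB w)
  have HC := fun w => smooth_package hU hx (hC w)
  have hA1 : ∀ w, DifferentiableAt ℝ (fun y => A y w) x := fun w => (HA w).1
  have hB1 : ∀ w, DifferentiableAt ℝ (fun y => B y w) x := fun w => (HB w).1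
  have hC1 : ∀ w, DifferentiableAt ℝ (fun y => C y w) x := fun w => (HC w).1
  have hA2 : ∀ w u, DifferentiableAt ℝ
      (fun y => fderiv ℝ (fun z => A z w) y u) x := fun w u => (HA w).2.1 u
  have hB2 : ∀ w u, DifferentiableAt ℝ
      (fun y => fderiv ℝ (fun z => B z w) y u) x := fun w u => (HB w).2.1 u
  have hC2 : ∀ w u, DifferentiableAt ℝ
      (fun y => fderiv ℝ (fun z => C z w) y u) x := fun w u => (HC w).2.1 u
  have hA3 : ∀ w u t, fderiv ℝ (fun y => fderiv ℝ (fun z => A z w) y u) x t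
      = fderiv ℝ (fun y => fderiv ℝ (fun z => A z w) y t) x u :=
    fun w u t => (HA w).2.2 u t
  have hB3 : ∀ w u t, fderiv ℝ (fun y => fderiv ℝ (fun z => B z w) y u) x t
      = fderiv ℝ (fun y => fderiv ℝ (fun z => B z w) y t) x u :=
    fun w u t => (HB w).2.2 u t
  have hC3 : ∀ w u t, fderiv ℝ (fun y => fderiv ℝ (fun z => C z w) y u) x t
      = fderiv ℝ (fun y => fderiv ℝ (fun z => C z w) y t) x u :=
    fun w u t => (HC w).2.2 u t
  have eΩ₁ : Ω₁ = fun y =>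
      extDerivRaw (fun z => ⇑(A z)) y + (2 : ℝ)⁻¹ • wedgeRaw br ⇑(A y) ⇑(A y) :=
    funext hΩ₁
  have eΩ₂ : Ω₂ = fun y =>
      extDerivRaw (fun z => ⇑(B z)) y + wedgeRaw ρh ⇑(A y) ⇑(B y) := funext hΩ₂
  have eΩ₃ : Ω₃ = fun y =>
      extDerivRaw (fun z => ⇑(C z)) y + wedgeRaw ρl ⇑(A y) ⇑(C y)
        + wedgeRaw pf ⇑(B y) ⇑(B y) := funext hΩ₃
  refine ⟨?_, ?_, ?_⟩
  · -- (i)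
    simp only [eΩ₁]
    rw [extDerivRaw_add (f := fun y => extDerivRaw (fun z => ⇑(A z)) y)
        (g := fun y => (2 : ℝ)⁻¹ • wedgeRaw (k₁ := 1) (k₂ := 1) br ⇑(A y) ⇑(A y))
        (fun w => diff_extDeriv hA2 w)
        (fun w => (diff_wedge br hA1 hA1 w).const_smul ((2:ℝ)⁻¹)),
      extDerivRaw_smul (f := fun y => wedgeRaw br ⇑(A y) ⇑(A y))
        ((2:ℝ)⁻¹) (fun w => diff_wedge br hA1 hA1 w),
      wedge_add_right, wedge_smul_right]
    funext v
    simp only [Pi.add_apply, Pi.smul_apply, Pi.zero_apply]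
    rw [dd_zero1 (fun z => ⇑(A z)) x hA2 hA3 v]
    rw [leib11 br (fun z => ⇑(A z)) (fun z => ⇑(A z)) x hA1 hA1 v]
    rw [eq_neg_of_add_eq_zero_left
      (p1 br hanti (extDerivRaw (fun z => ⇑(A z)) x) ⇑(A x) v)]
    rw [p2 br hanti br_jacobi ⇑(A x) v]
    module
  · -- (ii)
    simp only [eΩ₂, eΩ₁]
    rw [extDerivRaw_add (f := fun y => extDerivRaw (fun z => ⇑(B z)) y)
        (g := fun y => wedgeRaw (k₁ := 1) (k₂ := 2) ρh ⇑(A y) ⇑(B y))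
        (fun w => diff_extDeriv hB2 w)
        (fun w => diff_wedge ρh hA1 hB1 w),
      wedge_add_right, wedge_add_left, wedge_smul_left]
    funext v
    simp only [Pi.add_apply, Pi.smul_apply]
    rw [dd_zero2 (fun z => ⇑(B z)) x hB2 hB3 v]
    rw [leib12 ρh (fun z => ⇑(A z)) (fun z => ⇑(B z)) x hA1 hB1 v]
    rw [p3 br ρh hρh_action ⇑(A x) ⇑(B x) v]
    module
  · -- (iii)
    simp only [eΩ₃, eΩ₁, eΩ₂]
    rw [extDerivRaw_add
        (f := fun y => extDerivRaw (fun z => ⇑(C z)) y + wedgeRaw (k₁ := 1) (k₂ := 3) ρl ⇑(A y) ⇑(C y))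
        (g := fun y => wedgeRaw (k₁ := 2) (k₂ := 2) pf ⇑(B y) ⇑(B y))
        (fun w => (diff_extDeriv hC2 w).add (diff_wedge ρl hA1 hC1 w))
        (fun w => diff_wedge pf hB1 hB1 w),
      extDerivRaw_add (f := fun y => extDerivRaw (fun z => ⇑(C z)) y)
        (g := fun y => wedgeRaw (k₁ := 1) (k₂ := 3) ρl ⇑(A y) ⇑(C y))
        (fun w => diff_extDeriv hC2 w) (fun w => diff_wedge ρl hA1 hC1 w),
      wedge_add_right, wedge_add_right, wedge_add_left, wedge_smul_left,
      wedge_add_left, wedge_add_right]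
    funext v
    simp only [Pi.add_apply, Pi.smul_apply]
    rw [dd_zero3 (fun z => ⇑(C z)) x hC2 hC3 v]
    rw [leib13 ρl (fun z => ⇑(A z)) (fun z => ⇑(C z)) x hA1 hC1 v]
    rw [leib22 pf (fun z => ⇑(B z)) (fun z => ⇑(B z)) x hB1 hB1 v]
    rw [p4 br ρl hρl_action ⇑(A x) ⇑(C x) v]
    rw [p5 ρh ρl pf hpf_der ⇑(A x) ⇑(B x) v]
    module
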